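/- arXiv:math/0211236 — 10 statements merged into one kernel-verified Lean document; each statement's English description precedes it below -/
import Mathlib

section
/- Let X and Y be complete lattices (sup-lattices) and let p : X ⊗ Y ⊗ X → X be a sup-preserving map satisfying the associativity condition p(p(x₁⊗y₁⊗x₂)⊗y₂⊗x₃) = p(x₁⊗y₁⊗p(x₂⊗y₂⊗x₃)) for all xᵢ ∈ X, yᵢ ∈ Y. Then the set L = {L_a : a ∈ X ⊗ Y}, where L_a(x) = p(a ⊗ x), is closed under composition in the quantale Q(X) of sup-preserving endomaps of X; i.e., for all a, b ∈ X ⊗ Y, L_a ∘ L_b ∈ L. -/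
/-- A map `X ⊗ Y ⊗ X → X` encoded, via the universal property of the sup-lattice
tensor product, as a map preserving arbitrary joins in each variable. -/
def TriSupPreserving {α β γ δ : Type*} [CompleteLattice α] [CompleteLattice β]
    [CompleteLattice γ] [CompleteLattice δ] (p : α → β → γ → δ) : Prop :=
  (∀ (S : Set α) (y : β) (z : γ), p (sSup S) y z = ⨆ x ∈ S, p x y z) ∧
  (∀ (x : α) (S : Set β) (z : γ), p x (sSup S) z = ⨆ y ∈ S, p x y z) ∧
  (∀ (x : α) (y : β) (S : Set γ), p x y (sSup S) = ⨆ z ∈ S, p x y z)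

/-- The set `L = {L_a : a ∈ X ⊗ Y}` of sup-preserving operators on `X`:
every element `a` of the tensor product `X ⊗ Y` is a join of simple tensors,
so `L_a` is a pointwise join of the operators `z ↦ p x y z` over a set of
simple tensors. -/
def Lset {X Y : Type*} [CompleteLattice X] [CompleteLattice Y]
    (p : X → Y → X → X) : Set (X → X) :=
  {f | ∃ S : Set (X × Y), f = fun z => ⨆ t ∈ S, p t.1 t.2 z}

/-- under the associativity condition, `L` is closed under
composition in the quantale `Q(X)` of sup-preserving endomaps of `X`. -/
theorem lset_closed_under_comp {X Y : Type*} [CompleteLattice X] [CompleteLattice Y]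
    (p : X → Y → X → X) (hp : TriSupPreserving p)
    (assoc : ∀ (x₁ x₂ x₃ : X) (y₁ y₂ : Y),
      p (p x₁ y₁ x₂) y₂ x₃ = p x₁ y₁ (p x₂ y₂ x₃)) :
    ∀ f ∈ Lset p, ∀ g ∈ Lset p, (f ∘ g) ∈ Lset p := by
  rintro f ⟨S, rfl⟩ g ⟨T, rfl⟩
  have key : ∀ (x : X) (y : Y) (h : X × Y → X),
      p x y (⨆ u ∈ T, h u) = ⨆ u ∈ T, p x y (h u) := by
    intro x y h
    rw [show (⨆ u ∈ T, h u) = sSup (h '' T) by rw [sSup_image], hp.2.2, iSup_image]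
  refine ⟨(fun tu : (X × Y) × (X × Y) => (p tu.1.1 tu.1.2 tu.2.1, tu.2.2)) '' (S ×ˢ T), ?_⟩
  funext z
  simp only [Function.comp_apply, iSup_image]
  rw [iSup_congr (fun t => iSup_congr (fun (_ : t ∈ S) =>
    key t.1 t.2 (fun u => p u.1 u.2 z)))]
  rw [biSup_prod]
  simp_rw [← assoc]
end

section
/- Let X and Y be complete lattices, and let p : X ⊗ Y ⊗ X → X and q : Y ⊗ X ⊗ Y → Y be surjective sup-preserving maps satisfying: (1) p(p(x₁⊗y₁⊗x₂)⊗y₂⊗x₃) = p(x₁⊗q(y₁⊗x₂⊗y₂)⊗x₃) = p(x₁⊗y₁⊗p(x₂⊗y₂⊗x₃)); (2) the symmetric identities for q; (3) p(−⊗x₁) = p(−⊗x₂) implies x₁ = x₂. Then the quantale L = {L_a : a ∈ X⊗Y} ⊆ Q(X), where L_a(x) = p(a⊗x), is essential: every element of L is a join of products of pairs of elements of L. -/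
lemma lset_aux {X Y ι : Type*} [CompleteLattice X] [CompleteLattice Y]
    (p : X → Y → X → X)
    (hp1 : ∀ (S : Set X) (y : Y) (z : X), p (sSup S) y z = ⨆ x ∈ S, p x y z)
    (S' : Set ι) (g : ι → X) (y : Y) (z : X) :
    p (⨆ t ∈ S', g t) y z = ⨆ t ∈ S', p (g t) y z := by
  rw [show (⨆ t ∈ S', g t) = sSup (g '' S') by rw [sSup_image], hp1, iSup_image]

/-- under conditions (1), (2), (3) and surjectivity, the quantale
`L` is essential: every element of `L` is a join of products (compositions) of
pairs of elements of `L`. -/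
theorem lset_essential {X Y : Type*} [CompleteLattice X] [CompleteLattice Y]
    (p : X → Y → X → X) (q : Y → X → Y → Y)
    (hp : TriSupPreserving p) (hq : TriSupPreserving q)
    -- surjectivity of the induced maps on tensor products:
    (psurj : ∀ x : X, ∃ S : Set (X × Y × X), x = ⨆ t ∈ S, p t.1 t.2.1 t.2.2)
    (qsurj : ∀ y : Y, ∃ S : Set (Y × X × Y), y = ⨆ t ∈ S, q t.1 t.2.1 t.2.2)
    -- condition (1):
    (c1a : ∀ (x₁ x₂ x₃ : X) (y₁ y₂ : Y),
      p (p x₁ y₁ x₂) y₂ x₃ = p x₁ (q y₁ x₂ y₂) x₃)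
    (c1b : ∀ (x₁ x₂ x₃ : X) (y₁ y₂ : Y),
      p (p x₁ y₁ x₂) y₂ x₃ = p x₁ y₁ (p x₂ y₂ x₃))
    -- condition (2):
    (c2a : ∀ (y₁ y₂ y₃ : Y) (x₁ x₂ : X),
      q (q y₁ x₁ y₂) x₂ y₃ = q y₁ (p x₁ y₂ x₂) y₃)
    (c2b : ∀ (y₁ y₂ y₃ : Y) (x₁ x₂ : X),
      q (q y₁ x₁ y₂) x₂ y₃ = q y₁ x₁ (q y₂ x₂ y₃))
    -- condition (3): `p(−⊗x₁) = p(−⊗x₂)` implies `x₁ = x₂`: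
    (c3 : ∀ x₁ x₂ : X, (∀ (x : X) (y : Y), p x y x₁ = p x y x₂) → x₁ = x₂) :
    ∀ f ∈ Lset p, ∃ T : Set ((X → X) × (X → X)),
      (∀ t ∈ T, t.1 ∈ Lset p ∧ t.2 ∈ Lset p) ∧
      f = fun z => ⨆ t ∈ T, t.1 (t.2 z) := by
  intro f hf
  obtain ⟨S, rfl⟩ := hf
  choose Sel hSel using psurj
  refine ⟨{gh | ∃ t ∈ S, ∃ u ∈ Sel t.1,
      gh = ((fun z => p u.1 u.2.1 z), (fun z => p u.2.2 t.2 z))}, ?_, ?_⟩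
  · rintro gh ⟨t, ht, u, hu, rfl⟩
    constructor
    · exact ⟨{(u.1, u.2.1)}, by funext z; simp⟩
    · exact ⟨{(u.2.2, t.2)}, by funext z; simp⟩
  · funext z
    have key : ∀ t : X × Y,
        p t.1 t.2 z = ⨆ u ∈ Sel t.1, p u.1 u.2.1 (p u.2.2 t.2 z) := by
      intro t
      conv_lhs => rw [hSel t.1]
      rw [lset_aux p hp.1]
      exact iSup_congr fun u => iSup_congr fun hu => c1b _ _ _ _ _
    apply le_antisymm
    · refine iSup₂_le fun t ht => ?_
      rw [key t]
      refine iSup₂_le fun u hu => ?_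
      exact le_iSup₂ (f := fun (gh : (X → X) × (X → X)) _ => gh.1 (gh.2 z))
        ((fun z => p u.1 u.2.1 z), (fun z => p u.2.2 t.2 z)) ⟨t, ht, u, hu, rfl⟩
    · refine iSup₂_le ?_
      rintro gh ⟨t, ht, u, hu, rfl⟩
      have : p u.1 u.2.1 (p u.2.2 t.2 z) ≤ p t.1 t.2 z := by
        rw [key t]
        exact le_iSup₂ (f := fun (u : X × Y × X) _ => p u.1 u.2.1 (p u.2.2 t.2 z)) u hu
      exact this.trans (le_iSup₂ (f := fun (t : X × Y) _ => p t.1 t.2 z) t ht)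
end

section
/- Let X and Y be complete lattices, and let p : X ⊗ Y ⊗ X → X be a surjective sup-preserving map. Let L = {L_a : a ∈ X⊗Y} with L_a(x) = p(a⊗x). If a, b ∈ X⊗Y satisfy L_a ∘ L_{x⊗y} = L_b ∘ L_{x⊗y} for all x ∈ X and y ∈ Y, then L_a = L_b. (Here L_a ∘ L_{x⊗y}(z) uses the associativity identity p(a ⊗ p(x⊗y⊗z)) = L_a(p(x⊗y⊗z)).) -/
/-- if `p` is surjective and `L_a ∘ L_{x⊗y} = L_b ∘ L_{x⊗y}`
for all `x ∈ X`, `y ∈ Y`, then `L_a = L_b`.  Here `a, b ∈ X ⊗ Y` are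
represented by sets `Sa, Sb` of simple tensors, `L_a(z) = p(a ⊗ z)`. -/
theorem left_operator_ext {X Y : Type*} [CompleteLattice X] [CompleteLattice Y]
    (p : X → Y → X → X) (hp : TriSupPreserving p)
    -- surjectivity of the induced map `X ⊗ Y ⊗ X → X`:
    (psurj : ∀ x : X, ∃ S : Set (X × Y × X), x = ⨆ t ∈ S, p t.1 t.2.1 t.2.2)
    (Sa Sb : Set (X × Y))
    -- `L_a ∘ L_{x⊗y} = L_b ∘ L_{x⊗y}` for all `x, y`:
    (h : ∀ (x : X) (y : Y) (z : X),
      (⨆ t ∈ Sa, p t.1 t.2 (p x y z)) = ⨆ t ∈ Sb, p t.1 t.2 (p x y z)) :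
    (fun z => ⨆ t ∈ Sa, p t.1 t.2 z) = fun z => ⨆ t ∈ Sb, p t.1 t.2 z := by
  funext z
  obtain ⟨S, hS⟩ := psurj z
  have key : ∀ Sc : Set (X × Y),
      (⨆ t ∈ Sc, p t.1 t.2 z) = ⨆ t ∈ Sc, ⨆ s ∈ S, p t.1 t.2 (p s.1 s.2.1 s.2.2) := by
    intro Sc
    refine iSup_congr fun t => iSup_congr fun _ => ?_
    have : z = sSup ((fun s : X × Y × X => p s.1 s.2.1 s.2.2) '' S) := by
      rw [sSup_image]; exact hS
    rw [this, hp.2.2, iSup_image]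
  have swap : ∀ Sc : Set (X × Y),
      (⨆ t ∈ Sc, ⨆ s ∈ S, p t.1 t.2 (p s.1 s.2.1 s.2.2)) =
        ⨆ s ∈ S, ⨆ t ∈ Sc, p t.1 t.2 (p s.1 s.2.1 s.2.2) := fun Sc => iSup₂_comm _
  rw [key Sa, key Sb, swap Sa, swap Sb]
  exact iSup_congr fun s => iSup_congr fun _ => h s.1 s.2.1 s.2.2
end

section
/- Let X and Y be complete lattices and suppose there exist surjective sup-preserving maps p : X⊗Y⊗X → X and q : Y⊗X⊗Y → Y satisfying conditions (1)-(6): (1) p(p(x₁⊗y₁⊗x₂)⊗y₂⊗x₃) = p(x₁⊗q(y₁⊗x₂⊗y₂)⊗x₃) = p(x₁⊗y₁⊗p(x₂⊗y₂⊗x₃)); (2) q(q(y₁⊗x₁⊗y₂)⊗x₂⊗y₃) = q(y₁⊗p(x₁⊗y₂⊗x₂)⊗y₃) = q(y₁⊗x₁⊗q(y₂⊗x₂⊗y₃)); (3) p(−⊗x₁)=p(−⊗x₂) ⟹ x₁=x₂; (4) p(x₁⊗−)=p(x₂⊗−) ⟹ x₁=x₂; (5) q(−⊗y₁)=q(−⊗y₂)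 ⟹ y₁=y₂; (6) q(y₁⊗−)=q(y₂⊗−) ⟹ y₁=y₂. Then there exist m-regular quantales A, B such that (X,Y) is a Morita equivalence pair between A and B; in particular one may take A = {L_a : a ∈ X⊗Y} ⊆ Q(X) and B = {R_b : b ∈ Y⊗X} ⊆ Q(Y). -/
universe u

/-- The data of a Morita context between quantales `A` and `B` with
equivalence bimodules `X` and `Y`: multiplications, module actions and
pairings. -/
structure MoritaData (A B X Y : Type u) [CompleteLattice A] [CompleteLattice B]
    [CompleteLattice X] [CompleteLattice Y] where
  /-- multiplication of the quantale `A` -/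
  mulA : A → A → A
  /-- multiplication of the quantale `B` -/
  mulB : B → B → B
  /-- left action of `A` on `X` -/
  actAX : A → X → X
  /-- right action of `B` on `X` -/
  actXB : X → B → X
  /-- left action of `B` on `Y` -/
  actBY : B → Y → Y
  /-- right action of `A` on `Y` -/
  actYA : Y → A → Y
  /-- the pairing `(−,−) : X × Y → A` -/
  prA : X → Y → A
  /-- the pairing `[−,−] : Y × X → B` -/
  prB : Y → X → B

/-- The axioms of a Morita context between m-regular quantales. -/
structure IsMoritaContext {A B X Y : Type u} [CompleteLattice A] [CompleteLattice B]
    [CompleteLattice X] [CompleteLattice Y] (d : MoritaData A B X Y) : Prop where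
  -- `A` and `B` are quantales:
  mulA_assoc : ∀ a b c, d.mulA (d.mulA a b) c = d.mulA a (d.mulA b c)
  sSup_mulA : ∀ (S : Set A) (a : A), d.mulA (sSup S) a = ⨆ b ∈ S, d.mulA b a
  mulA_sSup : ∀ (a : A) (S : Set A), d.mulA a (sSup S) = ⨆ b ∈ S, d.mulA a b
  mulB_assoc : ∀ a b c, d.mulB (d.mulB a b) c = d.mulB a (d.mulB b c)
  sSup_mulB : ∀ (S : Set B) (b : B), d.mulB (sSup S) b = ⨆ c ∈ S, d.mulB c b
  mulB_sSup : ∀ (b : B) (S : Set B), d.mulB b (sSup S) = ⨆ c ∈ S, d.mulB b c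
  -- `A` and `B` are m-regular:
  essA : ∀ a : A, ∃ S : Set (A × A), a = ⨆ t ∈ S, d.mulA t.1 t.2
  lsepA : ∀ a b : A, (∀ x, d.mulA a x = d.mulA b x) → a = b
  rsepA : ∀ a b : A, (∀ x, d.mulA x a = d.mulA x b) → a = b
  essB : ∀ b : B, ∃ S : Set (B × B), b = ⨆ t ∈ S, d.mulB t.1 t.2
  lsepB : ∀ a b : B, (∀ x, d.mulB a x = d.mulB b x) → a = b
  rsepB : ∀ a b : B, (∀ x, d.mulB x a = d.mulB x b) → a = b
  -- `X` is an `A,B`-bimodule: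
  actAX_mul : ∀ a a' x, d.actAX (d.mulA a a') x = d.actAX a (d.actAX a' x)
  sSup_actAX : ∀ (S : Set A) (x : X), d.actAX (sSup S) x = ⨆ a ∈ S, d.actAX a x
  actAX_sSup : ∀ (a : A) (S : Set X), d.actAX a (sSup S) = ⨆ x ∈ S, d.actAX a x
  actXB_mul : ∀ x b b', d.actXB x (d.mulB b b') = d.actXB (d.actXB x b) b'
  sSup_actXB : ∀ (S : Set X) (b : B), d.actXB (sSup S) b = ⨆ x ∈ S, d.actXB x b
  actXB_sSup : ∀ (x : X) (S : Set B), d.actXB x (sSup S) = ⨆ b ∈ S, d.actXB x b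
  commX : ∀ a x b, d.actXB (d.actAX a x) b = d.actAX a (d.actXB x b)
  -- `X` is m-regular:
  essXl : ∀ x : X, ∃ S : Set (A × X), x = ⨆ t ∈ S, d.actAX t.1 t.2
  sepXl : ∀ x x' : X, (∀ a, d.actAX a x = d.actAX a x') → x = x'
  essXr : ∀ x : X, ∃ S : Set (X × B), x = ⨆ t ∈ S, d.actXB t.1 t.2
  sepXr : ∀ x x' : X, (∀ b, d.actXB x b = d.actXB x' b) → x = x'
  -- `Y` is a `B,A`-bimodule:
  actBY_mul : ∀ b b' y, d.actBY (d.mulB b b') y = d.actBY b (d.actBY b' y)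
  sSup_actBY : ∀ (S : Set B) (y : Y), d.actBY (sSup S) y = ⨆ b ∈ S, d.actBY b y
  actBY_sSup : ∀ (b : B) (S : Set Y), d.actBY b (sSup S) = ⨆ y ∈ S, d.actBY b y
  actYA_mul : ∀ y a a', d.actYA y (d.mulA a a') = d.actYA (d.actYA y a) a'
  sSup_actYA : ∀ (S : Set Y) (a : A), d.actYA (sSup S) a = ⨆ y ∈ S, d.actYA y a
  actYA_sSup : ∀ (y : Y) (S : Set A), d.actYA y (sSup S) = ⨆ a ∈ S, d.actYA y a
  commY : ∀ b y a, d.actYA (d.actBY b y) a = d.actBY b (d.actYA y a)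
  -- `Y` is m-regular:
  essYl : ∀ y : Y, ∃ S : Set (B × Y), y = ⨆ t ∈ S, d.actBY t.1 t.2
  sepYl : ∀ y y' : Y, (∀ b, d.actBY b y = d.actBY b y') → y = y'
  essYr : ∀ y : Y, ∃ S : Set (Y × A), y = ⨆ t ∈ S, d.actYA t.1 t.2
  sepYr : ∀ y y' : Y, (∀ a, d.actYA y a = d.actYA y' a) → y = y'
  -- the pairings are sup-preserving in each variable:
  sSup_prA : ∀ (S : Set X) (y : Y), d.prA (sSup S) y = ⨆ x ∈ S, d.prA x y
  prA_sSup : ∀ (x : X) (S : Set Y), d.prA x (sSup S) = ⨆ y ∈ S, d.prA x y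
  sSup_prB : ∀ (S : Set Y) (x : X), d.prB (sSup S) x = ⨆ y ∈ S, d.prB y x
  prB_sSup : ∀ (y : Y) (S : Set X), d.prB y (sSup S) = ⨆ x ∈ S, d.prB y x
  -- the pairings are bimodule maps:
  prA_actA : ∀ a x y, d.prA (d.actAX a x) y = d.mulA a (d.prA x y)
  prA_actY : ∀ x y a, d.prA x (d.actYA y a) = d.mulA (d.prA x y) a
  prB_actB : ∀ b y x, d.prB (d.actBY b y) x = d.mulB b (d.prB y x)
  prB_actX : ∀ y x b, d.prB y (d.actXB x b) = d.mulB (d.prB y x) b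
  -- the pairings are balanced:
  prA_bal : ∀ x b y, d.prA (d.actXB x b) y = d.prA x (d.actBY b y)
  prB_bal : ∀ y a x, d.prB (d.actYA y a) x = d.prB y (d.actAX a x)
  -- the linking identities:
  link₁ : ∀ x₁ y x₂, d.actAX (d.prA x₁ y) x₂ = d.actXB x₁ (d.prB y x₂)
  link₂ : ∀ y₁ x y₂, d.actBY (d.prB y₁ x) y₂ = d.actYA y₁ (d.prA x y₂)
  -- the induced maps `X ⊗ Y → A` and `Y ⊗ X → B` are surjective:
  surjA : ∀ a : A, ∃ S : Set (X × Y), a = ⨆ t ∈ S, d.prA t.1 t.2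
  surjB : ∀ b : B, ∃ S : Set (Y × X), b = ⨆ t ∈ S, d.prB t.1 t.2


set_option linter.unusedVariables false
set_option linter.unusedSectionVars false

namespace MoritaProof

open Set

lemma biSup_pairs {α β γ δ : Type*} [CompleteLattice δ] (S : Set γ)
    (F : γ → α) (G : γ → β) (m : α → β → δ) :
    (⨆ v ∈ {v : α × β | ∃ t ∈ S, v = (F t, G t)}, m v.1 v.2) = ⨆ t ∈ S, m (F t) (G t) := by
  apply le_antisymm
  · refine iSup₂_le fun v hv => ?_
    obtain ⟨t, ht, rfl⟩ := hv
    exact le_iSup₂ (f := fun t (_ : t ∈ S) => m (F t) (G t)) t ht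
  · refine iSup₂_le fun t ht => ?_
    refine le_iSup₂ (f := fun v (_ : v ∈ {v : α × β | ∃ t ∈ S, v = (F t, G t)}) => m v.1 v.2) (F t, G t) ?_
    exact ⟨t, ht, rfl⟩

variable {X Y : Type u} [CompleteLattice X] [CompleteLattice Y]

def MA (p : X → Y → X → X) : Type u :=
  {f : X → X // ∃ S : Set (X × Y), f = fun z => ⨆ t ∈ S, p t.1 t.2 z}

variable {p : X → Y → X → X} {q : Y → X → Y → Y}

instance : PartialOrder (MA p) := by unfold MA; infer_instance

noncomputable instance : SupSet (MA p) :=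
  ⟨fun F => ⟨fun z => ⨆ f ∈ F, (f : MA p).1 z,
    ⋃ f : F, (f.1 : MA p).2.choose, by
      funext z
      rw [iSup_iUnion]
      rw [iSup_subtype']
      exact iSup_congr fun f => congrFun f.1.2.choose_spec z⟩⟩

noncomputable instance : CompleteLattice (MA p) :=
  completeLatticeOfSup (MA p) (fun F =>
    ⟨fun f hf z => le_iSup₂ (f := fun (g : MA p) (_ : g ∈ F) => g.1 z) f hf,
     fun g hg z => iSup₂_le fun f hf => hg hf z⟩)

lemma sSup_apply (F : Set (MA p)) (z : X) : (sSup F).1 z = ⨆ f ∈ F, f.1 z := rfl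

lemma iSup_apply' {ι : Sort*} (F : ι → MA p) (z : X) :
    (⨆ i, F i).1 z = ⨆ i, (F i).1 z := by
  rw [iSup, sSup_apply, iSup_range]

lemma biSup_apply {ι : Sort*} (P : ι → Prop) (F : ι → MA p) (z : X) :
    (⨆ i, ⨆ _ : P i, F i).1 z = ⨆ i, ⨆ _ : P i, (F i).1 z := by
  rw [iSup_apply']; exact iSup_congr fun i => iSup_apply' _ z


lemma biSup_comm' {δ : Type*} [CompleteLattice δ] {ι κ : Type*} (P : ι → Prop) (Q : κ → Prop)
    (f : ι → κ → δ) :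
    (⨆ i, ⨆ _ : P i, ⨆ j, ⨆ _ : Q j, f i j) = ⨆ j, ⨆ _ : Q j, ⨆ i, ⨆ _ : P i, f i j := by
  apply le_antisymm
  · exact iSup₂_le fun i hi => iSup₂_le fun j hj =>
      (le_iSup₂ (f := fun i (_ : P i) => f i j) i hi).trans
        (le_iSup₂ (f := fun j (_ : Q j) => ⨆ i, ⨆ _ : P i, f i j) j hj)
  · exact iSup₂_le fun j hj => iSup₂_le fun i hi =>
      (le_iSup₂ (f := fun j (_ : Q j) => f i j) j hj).trans
        (le_iSup₂ (f := fun i (_ : P i) => ⨆ j, ⨆ _ : Q j, f i j) i hi)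

section Hyps

variable (hp : TriSupPreserving p)
  (c1a : ∀ (x₁ x₂ x₃ : X) (y₁ y₂ : Y), p (p x₁ y₁ x₂) y₂ x₃ = p x₁ (q y₁ x₂ y₂) x₃)
  (c1b : ∀ (x₁ x₂ x₃ : X) (y₁ y₂ : Y), p (p x₁ y₁ x₂) y₂ x₃ = p x₁ y₁ (p x₂ y₂ x₃))
  (c3 : ∀ x₁ x₂ : X, (∀ (x : X) (y : Y), p x y x₁ = p x y x₂) → x₁ = x₂)
  (c4 : ∀ x₁ x₂ : X, (∀ (y : Y) (x : X), p x₁ y x = p x₂ y x) → x₁ = x₂)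
  (psurj : ∀ x : X, ∃ S : Set (X × Y × X), x = ⨆ t ∈ S, p t.1 t.2.1 t.2.2)

include hp

lemma p_iSup1 {ι : Sort*} (u : ι → X) (y : Y) (z : X) :
    p (⨆ i, u i) y z = ⨆ i, p (u i) y z := by rw [iSup, hp.1, iSup_range]

lemma p_iSup2 {ι : Sort*} (x : X) (u : ι → Y) (z : X) :
    p x (⨆ i, u i) z = ⨆ i, p x (u i) z := by rw [iSup, hp.2.1, iSup_range]

lemma p_iSup3 {ι : Sort*} (x : X) (y : Y) (u : ι → X) :
    p x y (⨆ i, u i) = ⨆ i, p x y (u i) := by rw [iSup, hp.2.2, iSup_range]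

lemma map_sSup (f : MA p) (U : Set X) : f.1 (sSup U) = ⨆ z ∈ U, f.1 z := by
  obtain ⟨S, hS⟩ := f.2
  simp only [hS, hp.2.2]
  exact biSup_comm' _ _ _

lemma map_iSup (f : MA p) {ι : Sort*} (u : ι → X) : f.1 (⨆ i, u i) = ⨆ i, f.1 (u i) := by
  rw [iSup, map_sSup hp, iSup_range]

include c1b in
lemma map_p (f : MA p) (x' : X) (y' : Y) (z : X) :
    f.1 (p x' y' z) = p (f.1 x') y' z := by
  obtain ⟨S, hS⟩ := f.2
  simp only [hS, ← c1b, p_iSup1 hp]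

end Hyps

/-- the product `L_a L_{a'}` -/
noncomputable def mul (hp : TriSupPreserving p)
    (c1b : ∀ (x₁ x₂ x₃ : X) (y₁ y₂ : Y), p (p x₁ y₁ x₂) y₂ x₃ = p x₁ y₁ (p x₂ y₂ x₃))
    (f g : MA p) : MA p :=
  ⟨f.1 ∘ g.1, {v : X × Y | ∃ t ∈ g.2.choose, v = (f.1 t.1, t.2)}, by
    funext z
    have h1 : (⨆ v ∈ {v : X × Y | ∃ t ∈ g.2.choose, v = (f.1 t.1, t.2)}, p v.1 v.2 z)
        = ⨆ t ∈ g.2.choose, p (f.1 t.1) t.2 z :=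
      biSup_pairs g.2.choose (fun t => f.1 t.1) (fun t => t.2) (fun a b => p a b z)
    show f.1 (g.1 z) = _
    rw [h1]
    conv_lhs => rw [congrFun g.2.choose_spec z]
    simp only [map_iSup hp f, map_p hp c1b f]⟩

lemma mul_apply (hp : TriSupPreserving p)
    (c1b : ∀ (x₁ x₂ x₃ : X) (y₁ y₂ : Y), p (p x₁ y₁ x₂) y₂ x₃ = p x₁ y₁ (p x₂ y₂ x₃))
    (f g : MA p) (z : X) : (mul hp c1b f g).1 z = f.1 (g.1 z) := rfl

/-- the pairing -/
def pr (p : X → Y → X → X) (x : X) (y : Y) : MA p :=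
  ⟨fun z => p x y z, {(x, y)}, by funext z; simp⟩

/-- the right action -/
noncomputable def actR (p : X → Y → X → X) (q : Y → X → Y → Y) (x : X) (g : MA q) : X :=
  ⨆ t ∈ g.2.choose, p x t.1 t.2

section Main

variable (hp : TriSupPreserving p) (hq : TriSupPreserving q)
  (c1a : ∀ (x₁ x₂ x₃ : X) (y₁ y₂ : Y), p (p x₁ y₁ x₂) y₂ x₃ = p x₁ (q y₁ x₂ y₂) x₃)
  (c1b : ∀ (x₁ x₂ x₃ : X) (y₁ y₂ : Y), p (p x₁ y₁ x₂) y₂ x₃ = p x₁ y₁ (p x₂ y₂ x₃))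
  (c2a : ∀ (y₁ y₂ y₃ : Y) (x₁ x₂ : X), q (q y₁ x₁ y₂) x₂ y₃ = q y₁ (p x₁ y₂ x₂) y₃)
  (c2b : ∀ (y₁ y₂ y₃ : Y) (x₁ x₂ : X), q (q y₁ x₁ y₂) x₂ y₃ = q y₁ x₁ (q y₂ x₂ y₃))
  (c3 : ∀ x₁ x₂ : X, (∀ (x : X) (y : Y), p x y x₁ = p x y x₂) → x₁ = x₂)
  (c4 : ∀ x₁ x₂ : X, (∀ (y : Y) (x : X), p x₁ y x = p x₂ y x) → x₁ = x₂)
  (psurj : ∀ x : X, ∃ S : Set (X × Y × X), x = ⨆ t ∈ S, p t.1 t.2.1 t.2.2)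

include hp c1b in
lemma mul_assoc' (f g h : MA p) :
    mul hp c1b (mul hp c1b f g) h = mul hp c1b f (mul hp c1b g h) :=
  Subtype.ext rfl

include hp c1b in
lemma sSup_mul (F : Set (MA p)) (a : MA p) :
    mul hp c1b (sSup F) a = ⨆ b ∈ F, mul hp c1b b a := by
  apply Subtype.ext
  funext z
  rw [biSup_apply]
  rfl

include hp c1b in
lemma mul_sSup (a : MA p) (F : Set (MA p)) :
    mul hp c1b a (sSup F) = ⨆ b ∈ F, mul hp c1b a b := by
  apply Subtype.ext
  funext z
  rw [biSup_apply]
  show a.1 ((sSup F).1 z) = _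
  rw [sSup_apply]
  simp only [map_iSup hp a]
  rfl

include hp c1b psurj in
lemma ess (f : MA p) : ∃ S : Set (MA p × MA p), f = ⨆ t ∈ S, mul hp c1b t.1 t.2 := by
  obtain ⟨Sf, hSf⟩ := f.2
  refine ⟨{v | ∃ tu ∈ {tu : (X × Y) × X × Y × X |
      tu.1 ∈ Sf ∧ tu.2 ∈ (psurj tu.1.1).choose},
      v = (pr p tu.2.1 tu.2.2.1, pr p tu.2.2.2 tu.1.2)}, ?_⟩
  have hbp := biSup_pairs {tu : (X × Y) × X × Y × X |
      tu.1 ∈ Sf ∧ tu.2 ∈ (psurj tu.1.1).choose}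
    (fun tu => pr p tu.2.1 tu.2.2.1) (fun tu => pr p tu.2.2.2 tu.1.2) (mul hp c1b)
  refine Eq.trans ?_ hbp.symm
  apply Subtype.ext
  funext z
  rw [biSup_apply]
  rw [show f.1 z = ⨆ t ∈ Sf, p t.1 t.2 z from congrFun hSf z]
  apply le_antisymm
  · refine iSup₂_le fun t ht => ?_
    have key : p t.1 t.2 z
        = ⨆ u ∈ (psurj t.1).choose, p u.1 u.2.1 (p u.2.2 t.2 z) := by
      conv_lhs => rw [(psurj t.1).choose_spec]
      simp only [p_iSup1 hp, c1b]
    rw [key]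
    refine iSup₂_le fun u hu => ?_
    exact le_iSup₂ (f := fun tu (_ : tu ∈ {tu : (X × Y) × X × Y × X |
      tu.1 ∈ Sf ∧ tu.2 ∈ (psurj tu.1.1).choose}) =>
        (mul hp c1b (pr p tu.2.1 tu.2.2.1) (pr p tu.2.2.2 tu.1.2)).1 z) (t, u) ⟨ht, hu⟩
  · refine iSup₂_le fun tu htu => ?_
    obtain ⟨h1, h2⟩ := htu
    have step1 : (mul hp c1b (pr p tu.2.1 tu.2.2.1) (pr p tu.2.2.2 tu.1.2)).1 z
        ≤ ⨆ u ∈ (psurj tu.1.1).choose, p u.1 u.2.1 (p u.2.2 tu.1.2 z) :=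
      le_iSup₂ (f := fun u (_ : u ∈ (psurj tu.1.1).choose) =>
        p u.1 u.2.1 (p u.2.2 tu.1.2 z)) tu.2 h2
    refine step1.trans ?_
    have key : p tu.1.1 tu.1.2 z
        = ⨆ u ∈ (psurj tu.1.1).choose, p u.1 u.2.1 (p u.2.2 tu.1.2 z) := by
      conv_lhs => rw [(psurj tu.1.1).choose_spec]
      simp only [p_iSup1 hp, c1b]
    rw [← key]
    exact le_iSup₂ (f := fun t (_ : t ∈ Sf) => p t.1 t.2 z) tu.1 h1

include hp c1b psurj in
lemma lsep (f g : MA p) (h : ∀ u, mul hp c1b f u = mul hp c1b g u) : f = g := by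
  apply Subtype.ext
  funext x
  obtain ⟨S, hS⟩ := psurj x
  rw [hS]
  simp only [map_iSup hp f, map_iSup hp g]
  refine iSup_congr fun t => iSup_congr fun _ => ?_
  exact congrFun (congrArg Subtype.val (h (pr p t.1 t.2.1))) t.2.2

include hp c1b c3 in
lemma rsep (f g : MA p) (h : ∀ u, mul hp c1b u f = mul hp c1b u g) : f = g := by
  apply Subtype.ext
  funext x
  apply c3
  intro x' y'
  exact congrFun (congrArg Subtype.val (h (pr p x' y'))) x

include hp c1a in
lemma actR_char (x : X) (g : MA q) (y : Y) (z : X) :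
    p (actR p q x g) y z = p x (g.1 y) z := by
  conv_rhs => rw [congrFun g.2.choose_spec y]
  show p (⨆ t ∈ g.2.choose, p x t.1 t.2) y z = _
  simp only [p_iSup1 hp, p_iSup2 hp, c1a]

include hp c1a c4 in
lemma actR_pr (x : X) (y : Y) (x' : X) : actR p q x (pr q y x') = p x y x' := by
  apply c4
  intro y' z
  rw [actR_char hp c1a]
  show p x (q y x' y') z = _
  rw [← c1a]

include hp hq c1a c2b c4 in
lemma actR_mul (x : X) (b b' : MA q) :
    actR p q x (mul hq c2b b b') = actR p q (actR p q x b) b' := by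
  apply c4
  intro y z
  simp only [actR_char hp c1a]
  rfl

include hp c1a c4 in
lemma sSup_actR (U : Set X) (g : MA q) :
    actR p q (sSup U) g = ⨆ x ∈ U, actR p q x g := by
  apply c4
  intro y z
  simp only [p_iSup1 hp, actR_char hp c1a, hp.1]

include hp c1a c4 in
lemma actR_sSup (x : X) (G : Set (MA q)) :
    actR p q x (sSup G) = ⨆ g ∈ G, actR p q x g := by
  apply c4
  intro y z
  simp only [actR_char hp c1a, p_iSup1 hp, sSup_apply, p_iSup2 hp]

include hp c1a c1b c4 in
lemma comm' (f : MA p) (x : X) (g : MA q) :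
    actR p q (f.1 x) g = f.1 (actR p q x g) := by
  apply c4
  intro y z
  rw [actR_char hp c1a (f.1 x) g y z, ← map_p hp c1b f x (g.1 y) z,
    ← map_p hp c1b f (actR p q x g) y z, actR_char hp c1a x g y z]

include psurj in
lemma essL (x : X) : ∃ S : Set (MA p × X), x = ⨆ t ∈ S, t.1.1 t.2 := by
  obtain ⟨S, hS⟩ := psurj x
  refine ⟨{v | ∃ t ∈ S, v = (pr p t.1 t.2.1, t.2.2)}, ?_⟩
  have hb := biSup_pairs S (fun t => pr p t.1 t.2.1) (fun t => t.2.2)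
    (fun (a : MA p) (x' : X) => a.1 x')
  exact hS.trans hb.symm

include c3 in
lemma sepL (x x' : X) (h : ∀ f : MA p, f.1 x = f.1 x') : x = x' :=
  c3 _ _ fun a b => h (pr p a b)

include hp c1a c4 psurj in
lemma essR (x : X) : ∃ S : Set (X × MA q), x = ⨆ t ∈ S, actR p q t.1 t.2 := by
  obtain ⟨S, hS⟩ := psurj x
  refine ⟨{v | ∃ t ∈ S, v = (t.1, pr q t.2.1 t.2.2)}, ?_⟩
  have hb := biSup_pairs S (fun t => t.1) (fun t => pr q t.2.1 t.2.2) (actR p q)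
  refine Eq.trans ?_ hb.symm
  refine hS.trans ?_
  exact iSup_congr fun t => iSup_congr fun _ => (actR_pr hp c1a c4 t.1 t.2.1 t.2.2).symm

include hp c1a c4 in
lemma sepR (x x' : X) (h : ∀ g : MA q, actR p q x g = actR p q x' g) : x = x' := by
  apply c4
  intro y z
  have := h (pr q y z)
  rw [actR_pr hp c1a c4, actR_pr hp c1a c4] at this
  exact this

include hp in
lemma sSup_pr (U : Set X) (y : Y) : pr p (sSup U) y = ⨆ x ∈ U, pr p x y := by
  apply Subtype.ext
  funext z
  rw [biSup_apply]
  exact hp.1 U y z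

include hp in
lemma pr_sSup (x : X) (V : Set Y) : pr p x (sSup V) = ⨆ y ∈ V, pr p x y := by
  apply Subtype.ext
  funext z
  rw [biSup_apply]
  exact hp.2.1 x V z

include hp c1b in
lemma pr_actL (f : MA p) (x : X) (y : Y) :
    pr p (f.1 x) y = mul hp c1b f (pr p x y) := by
  apply Subtype.ext
  funext z
  exact (map_p hp c1b f x y z).symm

include hp c1a c1b in
lemma pr_actR (x : X) (y : Y) (f : MA p) :
    pr p x (actR q p y f) = mul hp c1b (pr p x y) f := by
  apply Subtype.ext
  funext z
  show p x (actR q p y f) z = p x y (f.1 z)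
  conv_rhs => rw [congrFun f.2.choose_spec z]
  show p x (⨆ t ∈ f.2.choose, q y t.1 t.2) z = _
  simp only [p_iSup2 hp, p_iSup3 hp, ← c1a, c1b]

include hp c1a in
lemma pr_bal (x : X) (g : MA q) (y : Y) :
    pr p (actR p q x g) y = pr p x (g.1 y) := by
  apply Subtype.ext
  funext z
  exact actR_char hp c1a x g y z

lemma surj' (f : MA p) : ∃ S : Set (X × Y), f = ⨆ t ∈ S, pr p t.1 t.2 := by
  refine ⟨f.2.choose, ?_⟩
  apply Subtype.ext
  funext z
  rw [biSup_apply]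
  exact congrFun f.2.choose_spec z

end Main

end MoritaProof

open MoritaProof

/-- conditions (1)-(6) on surjective sup-preserving `p`, `q`
produce m-regular quantales `A`, `B` such that `(X,Y)` is a Morita
equivalence pair between `A` and `B`. -/
theorem morita_pair_of_conditions {X Y : Type u} [CompleteLattice X] [CompleteLattice Y]
    (p : X → Y → X → X) (q : Y → X → Y → Y)
    (hp : TriSupPreserving p) (hq : TriSupPreserving q)
    -- surjectivity:
    (psurj : ∀ x : X, ∃ S : Set (X × Y × X), x = ⨆ t ∈ S, p t.1 t.2.1 t.2.2)
    (qsurj : ∀ y : Y, ∃ S : Set (Y × X × Y), y = ⨆ t ∈ S, q t.1 t.2.1 t.2.2)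
    -- condition (1):
    (c1a : ∀ (x₁ x₂ x₃ : X) (y₁ y₂ : Y),
      p (p x₁ y₁ x₂) y₂ x₃ = p x₁ (q y₁ x₂ y₂) x₃)
    (c1b : ∀ (x₁ x₂ x₃ : X) (y₁ y₂ : Y),
      p (p x₁ y₁ x₂) y₂ x₃ = p x₁ y₁ (p x₂ y₂ x₃))
    -- condition (2):
    (c2a : ∀ (y₁ y₂ y₃ : Y) (x₁ x₂ : X),
      q (q y₁ x₁ y₂) x₂ y₃ = q y₁ (p x₁ y₂ x₂) y₃)
    (c2b : ∀ (y₁ y₂ y₃ : Y) (x₁ x₂ : X),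
      q (q y₁ x₁ y₂) x₂ y₃ = q y₁ x₁ (q y₂ x₂ y₃))
    -- conditions (3)-(6):
    (c3 : ∀ x₁ x₂ : X, (∀ (x : X) (y : Y), p x y x₁ = p x y x₂) → x₁ = x₂)
    (c4 : ∀ x₁ x₂ : X, (∀ (y : Y) (x : X), p x₁ y x = p x₂ y x) → x₁ = x₂)
    (c5 : ∀ y₁ y₂ : Y, (∀ (y : Y) (x : X), q y x y₁ = q y x y₂) → y₁ = y₂)
    (c6 : ∀ y₁ y₂ : Y, (∀ (x : X) (y : Y), q y₁ x y = q y₂ x y) → y₁ = y₂) :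
    ∃ (A : Type u) (iA : CompleteLattice A) (B : Type u) (iB : CompleteLattice B)
      (d : @MoritaData A B X Y iA iB _ _),
      @IsMoritaContext A B X Y iA iB _ _ d := by
  refine ⟨MA p, inferInstance, MA q, inferInstance,
    { mulA := mul hp c1b
      mulB := mul hq c2b
      actAX := fun a x => a.1 x
      actXB := fun x b => actR p q x b
      actBY := fun b y => b.1 y
      actYA := fun y a => actR q p y a
      prA := pr p
      prB := pr q }, ?_⟩
  exact {
    mulA_assoc := mul_assoc' hp c1b
    sSup_mulA := sSup_mul hp c1b
    mulA_sSup := mul_sSup hp c1b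
    mulB_assoc := mul_assoc' hq c2b
    sSup_mulB := sSup_mul hq c2b
    mulB_sSup := mul_sSup hq c2b
    essA := ess hp c1b psurj
    lsepA := lsep hp c1b psurj
    rsepA := rsep hp c1b c3
    essB := ess hq c2b qsurj
    lsepB := lsep hq c2b qsurj
    rsepB := rsep hq c2b c5
    actAX_mul := fun a a' x => rfl
    sSup_actAX := fun S x => sSup_apply S x
    actAX_sSup := fun a S => map_sSup hp a S
    actXB_mul := fun x b b' => actR_mul hp hq c1a c2b c4 x b b'
    sSup_actXB := fun S b => sSup_actR hp c1a c4 S b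
    actXB_sSup := fun x S => actR_sSup hp c1a c4 x S
    commX := fun a x b => comm' hp c1a c1b c4 a x b
    essXl := essL psurj
    sepXl := sepL c3
    essXr := essR hp c1a c4 psurj
    sepXr := sepR hp c1a c4
    actBY_mul := fun b b' y => rfl
    sSup_actBY := fun S y => sSup_apply S y
    actBY_sSup := fun b S => map_sSup hq b S
    actYA_mul := fun y a a' => actR_mul hq hp c2a c1b c6 y a a'
    sSup_actYA := fun S a => sSup_actR hq c2a c6 S a
    actYA_sSup := fun y S => actR_sSup hq c2a c6 y S
    commY := fun b y a => comm' hq c2a c2b c6 b y a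
    essYl := essL qsurj
    sepYl := sepL c5
    essYr := essR hq c2a c6 qsurj
    sepYr := sepR hq c2a c6
    sSup_prA := sSup_pr hp
    prA_sSup := pr_sSup hp
    sSup_prB := sSup_pr hq
    prB_sSup := pr_sSup hq
    prA_actA := fun a x y => pr_actL hp c1b a x y
    prA_actY := fun x y a => pr_actR hp c1a c1b x y a
    prB_actB := fun b y x => pr_actL hq c2b b y x
    prB_actX := fun y x b => pr_actR hq c2a c2b y x b
    prA_bal := fun x b y => pr_bal hp c1a x b y
    prB_bal := fun y a x => pr_bal hq c2a y a x
    link₁ := fun x₁ y x₂ => (actR_pr hp c1a c4 x₁ y x₂).symm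
    link₂ := fun y₁ x y₂ => (actR_pr hq c2a c6 y₁ x y₂).symm
    surjA := fun a => surj' a
    surjB := fun b => surj' b }
end

section
/- Let (A,B,X,Y,(−,−),[−,−]) be a Morita context between m-regular quantales A and B. Define p : X⊗Y⊗X → X and q : Y⊗X⊗Y → Y as the sup-preserving extensions of p̃(x₁,y,x₂) = (x₁,y)·x₂ and q̃(y₁,x,y₂) = [y₁,x]·y₂. Then p and q are surjective and satisfy: (1) p(p(x₁⊗y₁⊗x₂)⊗y₂⊗x₃) = p(x₁⊗q(y₁⊗x₂⊗y₂)⊗x₃) = p(x₁⊗y₁⊗p(x₂⊗y₂⊗x₃)); (2) the symmetric identities for q; (3)-(6) the separation conditions p(−⊗x₁)=p(−⊗x₂) ⟹ x₁=x₂, p(x₁⊗−)=p(x₂⊗−) ⟹ x₁=x₂, and analogously for q. -/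
universe u

private lemma map_biSup' {α β ι : Type u} [CompleteLattice α] [CompleteLattice β]
    (f : α → β) (h : ∀ S : Set α, f (sSup S) = ⨆ a ∈ S, f a)
    (S : Set ι) (g : ι → α) : f (⨆ i ∈ S, g i) = ⨆ i ∈ S, f (g i) := by
  rw [← sSup_image, h, iSup_image]

private lemma mono_of_sSup' {α β : Type u} [CompleteLattice α] [CompleteLattice β]
    (f : α → β) (h : ∀ S : Set α, f (sSup S) = ⨆ a ∈ S, f a) : Monotone f := by
  intro a b hab
  have hs : sSup ({a, b} : Set α) = b := by rw [sSup_pair, sup_eq_right.mpr hab]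
  have hb := h {a, b}
  rw [hs] at hb
  rw [hb]
  exact le_iSup₂ (f := fun c _ => f c) a (by simp)

/-- given a Morita context `(A,B,X,Y,(−,−),[−,−])` between
m-regular quantales, the maps `p(x₁⊗y⊗x₂) = (x₁,y)·x₂` and
`q(y₁⊗x⊗y₂) = [y₁,x]·y₂` are surjective and satisfy conditions (1)-(6). -/
theorem conditions_of_morita_context {A B X Y : Type u}
    [CompleteLattice A] [CompleteLattice B] [CompleteLattice X] [CompleteLattice Y]
    (d : MoritaData A B X Y) (hd : IsMoritaContext d) :
    -- `p` is surjective: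
    (∀ x : X, ∃ S : Set (X × Y × X),
      x = ⨆ t ∈ S, d.actAX (d.prA t.1 t.2.1) t.2.2) ∧
    -- `q` is surjective:
    (∀ y : Y, ∃ S : Set (Y × X × Y),
      y = ⨆ t ∈ S, d.actBY (d.prB t.1 t.2.1) t.2.2) ∧
    -- condition (1):
    (∀ (x₁ x₂ x₃ : X) (y₁ y₂ : Y),
      d.actAX (d.prA (d.actAX (d.prA x₁ y₁) x₂) y₂) x₃ =
        d.actAX (d.prA x₁ (d.actBY (d.prB y₁ x₂) y₂)) x₃ ∧
      d.actAX (d.prA (d.actAX (d.prA x₁ y₁) x₂) y₂) x₃ =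
        d.actAX (d.prA x₁ y₁) (d.actAX (d.prA x₂ y₂) x₃)) ∧
    -- condition (2):
    (∀ (y₁ y₂ y₃ : Y) (x₁ x₂ : X),
      d.actBY (d.prB (d.actBY (d.prB y₁ x₁) y₂) x₂) y₃ =
        d.actBY (d.prB y₁ (d.actAX (d.prA x₁ y₂) x₂)) y₃ ∧
      d.actBY (d.prB (d.actBY (d.prB y₁ x₁) y₂) x₂) y₃ =
        d.actBY (d.prB y₁ x₁) (d.actBY (d.prB y₂ x₂) y₃)) ∧
    -- condition (3):
    (∀ x₁ x₂ : X,
      (∀ (x : X) (y : Y), d.actAX (d.prA x y) x₁ = d.actAX (d.prA x y) x₂) →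
      x₁ = x₂) ∧
    -- condition (4):
    (∀ x₁ x₂ : X,
      (∀ (y : Y) (x : X), d.actAX (d.prA x₁ y) x = d.actAX (d.prA x₂ y) x) →
      x₁ = x₂) ∧
    -- condition (5):
    (∀ y₁ y₂ : Y,
      (∀ (y : Y) (x : X), d.actBY (d.prB y x) y₁ = d.actBY (d.prB y x) y₂) →
      y₁ = y₂) ∧
    -- condition (6):
    (∀ y₁ y₂ : Y,
      (∀ (x : X) (y : Y), d.actBY (d.prB y₁ x) y = d.actBY (d.prB y₂ x) y) →
      y₁ = y₂) := by
  classical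
  -- monotonicity facts
  have monoAXl : ∀ x : X, Monotone (fun a : A => d.actAX a x) := fun x =>
    mono_of_sSup' _ (fun S => hd.sSup_actAX S x)
  have monoAXr : ∀ a : A, Monotone (d.actAX a) := fun a =>
    mono_of_sSup' _ (fun S => hd.actAX_sSup a S)
  have monoBYl : ∀ y : Y, Monotone (fun b : B => d.actBY b y) := fun y =>
    mono_of_sSup' _ (fun S => hd.sSup_actBY S y)
  have monoBYr : ∀ b : B, Monotone (d.actBY b) := fun b =>
    mono_of_sSup' _ (fun S => hd.actBY_sSup b S)
  refine ⟨?_, ?_, ?_, ?_, ?_, ?_, ?_, ?_⟩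
  · -- p surjective
    intro x
    refine ⟨{t : X × Y × X | d.actAX (d.prA t.1 t.2.1) t.2.2 ≤ x}, le_antisymm ?_ ?_⟩
    · obtain ⟨S, hS⟩ := hd.essXl x
      conv_lhs => rw [hS]
      refine iSup₂_le fun t ht => ?_
      obtain ⟨T, hT⟩ := hd.surjA t.1
      have h1 : d.actAX t.1 t.2 = ⨆ u ∈ T, d.actAX (d.prA u.1 u.2) t.2 := by
        conv_lhs => rw [hT]
        exact map_biSup' (fun a => d.actAX a t.2) (fun S => hd.sSup_actAX S t.2) T _
      rw [h1]
      refine iSup₂_le fun u hu => ?_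
      have hle : d.actAX (d.prA u.1 u.2) t.2 ≤ x := by
        have h2 : d.prA u.1 u.2 ≤ t.1 := by
          conv_rhs => rw [hT]
          exact le_iSup₂ (f := fun u _ => d.prA u.1 u.2) u hu
        calc d.actAX (d.prA u.1 u.2) t.2 ≤ d.actAX t.1 t.2 := monoAXl t.2 h2
          _ ≤ x := (le_iSup₂ (f := fun t _ => d.actAX t.1 t.2) t ht).trans hS.ge
      exact le_iSup₂ (f := fun (t : X × Y × X) (_ : d.actAX (d.prA t.1 t.2.1) t.2.2 ≤ x) =>
        d.actAX (d.prA t.1 t.2.1) t.2.2) (u.1, u.2, t.2) hle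
    · exact iSup₂_le fun t ht => ht
  · -- q surjective
    intro y
    refine ⟨{t : Y × X × Y | d.actBY (d.prB t.1 t.2.1) t.2.2 ≤ y}, le_antisymm ?_ ?_⟩
    · obtain ⟨S, hS⟩ := hd.essYl y
      conv_lhs => rw [hS]
      refine iSup₂_le fun t ht => ?_
      obtain ⟨T, hT⟩ := hd.surjB t.1
      have h1 : d.actBY t.1 t.2 = ⨆ u ∈ T, d.actBY (d.prB u.1 u.2) t.2 := by
        conv_lhs => rw [hT]
        exact map_biSup' (fun b => d.actBY b t.2) (fun S => hd.sSup_actBY S t.2) T _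
      rw [h1]
      refine iSup₂_le fun u hu => ?_
      have hle : d.actBY (d.prB u.1 u.2) t.2 ≤ y := by
        have h2 : d.prB u.1 u.2 ≤ t.1 := by
          conv_rhs => rw [hT]
          exact le_iSup₂ (f := fun u _ => d.prB u.1 u.2) u hu
        calc d.actBY (d.prB u.1 u.2) t.2 ≤ d.actBY t.1 t.2 := monoBYl t.2 h2
          _ ≤ y := (le_iSup₂ (f := fun t _ => d.actBY t.1 t.2) t ht).trans hS.ge
      exact le_iSup₂ (f := fun (t : Y × X × Y) (_ : d.actBY (d.prB t.1 t.2.1) t.2.2 ≤ y) =>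
        d.actBY (d.prB t.1 t.2.1) t.2.2) (u.1, u.2, t.2) hle
    · exact iSup₂_le fun t ht => ht
  · -- condition (1)
    intro x₁ x₂ x₃ y₁ y₂
    constructor
    · rw [hd.prA_actA, hd.link₂, hd.prA_actY]
    · rw [hd.prA_actA, hd.actAX_mul]
  · -- condition (2)
    intro y₁ y₂ y₃ x₁ x₂
    constructor
    · rw [hd.prB_actB, hd.link₁, hd.prB_actX]
    · rw [hd.prB_actB, hd.actBY_mul]
  · -- condition (3)
    intro x₁ x₂ h
    refine hd.sepXl x₁ x₂ fun a => ?_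
    obtain ⟨S, hS⟩ := hd.surjA a
    rw [hS,
      map_biSup' (fun a => d.actAX a x₁) (fun S => hd.sSup_actAX S x₁) S _,
      map_biSup' (fun a => d.actAX a x₂) (fun S => hd.sSup_actAX S x₂) S _]
    exact iSup_congr fun t => iSup_congr fun _ => h t.1 t.2
  · -- condition (4)
    intro x₁ x₂ h
    refine hd.sepXr x₁ x₂ fun b => ?_
    obtain ⟨S, hS⟩ := hd.surjB b
    rw [hS,
      map_biSup' (d.actXB x₁) (hd.actXB_sSup x₁) S _,
      map_biSup' (d.actXB x₂) (hd.actXB_sSup x₂) S _]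
    refine iSup_congr fun t => iSup_congr fun _ => ?_
    rw [← hd.link₁, ← hd.link₁]
    exact h t.1 t.2
  · -- condition (5)
    intro y₁ y₂ h
    refine hd.sepYl y₁ y₂ fun b => ?_
    obtain ⟨S, hS⟩ := hd.surjB b
    rw [hS,
      map_biSup' (fun b => d.actBY b y₁) (fun S => hd.sSup_actBY S y₁) S _,
      map_biSup' (fun b => d.actBY b y₂) (fun S => hd.sSup_actBY S y₂) S _]
    exact iSup_congr fun t => iSup_congr fun _ => h t.1 t.2
  · -- condition (6)
    intro y₁ y₂ h
    refine hd.sepYr y₁ y₂ fun a => ?_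
    obtain ⟨S, hS⟩ := hd.surjA a
    rw [hS,
      map_biSup' (d.actYA y₁) (hd.actYA_sSup y₁) S _,
      map_biSup' (d.actYA y₂) (hd.actYA_sSup y₂) S _]
    refine iSup_congr fun t => iSup_congr fun _ => ?_
    rw [← hd.link₂, ← hd.link₂]
    exact h t.1 t.2
end

section
/- Let X be a complete lattice and p : X ⊗ X* ⊗ X → X a surjective sup-preserving map satisfying p(p(x₁⊗x₂*⊗x₃)⊗x₄*⊗x₅) = p(x₁⊗p(x₄⊗x₃*⊗x₂)*⊗x₅) = p(x₁⊗x₂*⊗p(x₃⊗x₄*⊗x₅)) for all xᵢ ∈ X, together with the separation conditions p(−⊗x₁)=p(−⊗x₂) ⟹ x₁=x₂ and p(x₁⊗−)=p(x₂⊗−) ⟹ x₁=x₂. Define q : X*⊗X⊗X* → X* by q(x*⊗y⊗z*) = p(z⊗y*⊗x)*. Then the pair (p,q) satisfies all six conditions of the Morita pair characterization: the two associativity families for p and q, and the four separation conditions. -/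
/-- for `p : X ⊗ X* ⊗ X → X` (with `X* = X` via the identity
conjugation) satisfying condition a) and the separation conditions b), c),
the map `q(x*⊗y⊗z*) = p(z⊗y*⊗x)*` together with `p` satisfies all six
conditions of the Morita pair characterization. -/
theorem involutive_pair_conditions {X : Type*} [CompleteLattice X]
    (p : X → X → X → X) (hp : TriSupPreserving p)
    -- `p` is surjective:
    (psurj : ∀ x : X, ∃ S : Set (X × X × X), x = ⨆ t ∈ S, p t.1 t.2.1 t.2.2)
    -- condition a):
    (ha1 : ∀ x₁ x₂ x₃ x₄ x₅ : X,
      p (p x₁ x₂ x₃) x₄ x₅ = p x₁ (p x₄ x₃ x₂) x₅)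
    (ha2 : ∀ x₁ x₂ x₃ x₄ x₅ : X,
      p (p x₁ x₂ x₃) x₄ x₅ = p x₁ x₂ (p x₃ x₄ x₅))
    -- condition b):
    (hb : ∀ x₁ x₂ : X, (∀ x y : X, p x y x₁ = p x y x₂) → x₁ = x₂)
    -- condition c):
    (hc : ∀ x₁ x₂ : X, (∀ y x : X, p x₁ y x = p x₂ y x) → x₁ = x₂) :
    -- with `q (x, y, z) := p z y x`, the six conditions hold:
    -- condition (1):
    (∀ x₁ x₂ x₃ y₁ y₂ : X,
      p (p x₁ y₁ x₂) y₂ x₃ = p x₁ ((fun a b c => p c b a) y₁ x₂ y₂) x₃ ∧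
      p (p x₁ y₁ x₂) y₂ x₃ = p x₁ y₁ (p x₂ y₂ x₃)) ∧
    -- condition (2):
    (∀ y₁ y₂ y₃ x₁ x₂ : X,
      (fun a b c => p c b a) ((fun a b c => p c b a) y₁ x₁ y₂) x₂ y₃ =
        (fun a b c => p c b a) y₁ (p x₁ y₂ x₂) y₃ ∧
      (fun a b c => p c b a) ((fun a b c => p c b a) y₁ x₁ y₂) x₂ y₃ =
        (fun a b c => p c b a) y₁ x₁ ((fun a b c => p c b a) y₂ x₂ y₃)) ∧
    -- condition (3):
    (∀ x₁ x₂ : X, (∀ x y : X, p x y x₁ = p x y x₂) → x₁ = x₂) ∧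
    -- condition (4):
    (∀ x₁ x₂ : X, (∀ y x : X, p x₁ y x = p x₂ y x) → x₁ = x₂) ∧
    -- condition (5):
    (∀ y₁ y₂ : X,
      (∀ y x : X, (fun a b c => p c b a) y x y₁ = (fun a b c => p c b a) y x y₂) →
      y₁ = y₂) ∧
    -- condition (6):
    (∀ y₁ y₂ : X,
      (∀ x y : X, (fun a b c => p c b a) y₁ x y = (fun a b c => p c b a) y₂ x y) →
      y₁ = y₂) := by
  refine ⟨fun x₁ x₂ x₃ y₁ y₂ => ⟨(ha1 ..), (ha2 ..)⟩,
    fun y₁ y₂ y₃ x₁ x₂ => ⟨?_, ?_⟩, hb, hc,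
    fun y₁ y₂ h => hc y₁ y₂ fun y x => h x y,
    fun y₁ y₂ h => hb y₁ y₂ fun x y => h y x⟩
  · simp only
    rw [← ha2, ha1]
  · simp only
    rw [← ha2]
end

section
/- Let A and B be m-regular involutive quantales and X an imprimitivity bimodule between A and B, with inner products _A⟨−,−⟩ : X×X → A and ⟨−,−⟩_B : X×X → B satisfying _A⟨x,y⟩·z = x·⟨y,z⟩_B. Define pairings (−,−) : X × X* → A and [−,−] : X* × X → B by (x, y*) = _A⟨x,y⟩ and [x*, y] = ⟨x,y⟩_B. Then (A, B, X, X*, (−,−), [−,−]) is a Morita context; in particular A and B are Morita equivalent. -/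
universe u

/-- if `X` is an imprimitivity bimodule between m-regular
involutive quantales `A` and `B`, then with the pairings `(x, y*) = _A⟨x,y⟩`,
`[x*, y] = ⟨x,y⟩_B` and the conjugate bimodule structure on `X* = X`,
the 6-tuple `(A, B, X, X*, (−,−), [−,−])` is a Morita context; in particular
`A` and `B` are Morita equivalent. -/
theorem morita_context_of_imprimitivity {A B X : Type u}
    [CompleteLattice A] [CompleteLattice B] [CompleteLattice X]
    (mulA : A → A → A) (starA : A → A) (mulB : B → B → B) (starB : B → B)
    (l : A → X → X) (r : X → B → X)
    (ipA : X → X → A) (ipB : X → X → B)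
    -- `A` is an involutive quantale:
    (mulA_assoc : ∀ a b c, mulA (mulA a b) c = mulA a (mulA b c))
    (sSup_mulA : ∀ (S : Set A) a, mulA (sSup S) a = ⨆ b ∈ S, mulA b a)
    (mulA_sSup : ∀ a (S : Set A), mulA a (sSup S) = ⨆ b ∈ S, mulA a b)
    (starA_starA : ∀ a, starA (starA a) = a)
    (starA_sSup : ∀ S : Set A, starA (sSup S) = ⨆ a ∈ S, starA a)
    (starA_mul : ∀ a b, starA (mulA a b) = mulA (starA b) (starA a))
    -- `B` is an involutive quantale:
    (mulB_assoc : ∀ a b c, mulB (mulB a b) c = mulB a (mulB b c))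
    (sSup_mulB : ∀ (S : Set B) b, mulB (sSup S) b = ⨆ c ∈ S, mulB c b)
    (mulB_sSup : ∀ b (S : Set B), mulB b (sSup S) = ⨆ c ∈ S, mulB b c)
    (starB_starB : ∀ b, starB (starB b) = b)
    (starB_sSup : ∀ S : Set B, starB (sSup S) = ⨆ b ∈ S, starB b)
    (starB_mul : ∀ a b, starB (mulB a b) = mulB (starB b) (starB a))
    -- `A` and `B` are m-regular:
    (essA : ∀ a : A, ∃ S : Set (A × A), a = ⨆ t ∈ S, mulA t.1 t.2)
    (lsepA : ∀ a b : A, (∀ x, mulA a x = mulA b x) → a = b)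
    (rsepA : ∀ a b : A, (∀ x, mulA x a = mulA x b) → a = b)
    (essB : ∀ b : B, ∃ S : Set (B × B), b = ⨆ t ∈ S, mulB t.1 t.2)
    (lsepB : ∀ a b : B, (∀ x, mulB a x = mulB b x) → a = b)
    (rsepB : ∀ a b : B, (∀ x, mulB x a = mulB x b) → a = b)
    -- `X` is an `A,B`-bimodule:
    (l_mul : ∀ a a' x, l (mulA a a') x = l a (l a' x))
    (sSup_l : ∀ (S : Set A) x, l (sSup S) x = ⨆ a ∈ S, l a x)
    (l_sSup : ∀ a (S : Set X), l a (sSup S) = ⨆ x ∈ S, l a x)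
    (r_mul : ∀ x b b', r x (mulB b b') = r (r x b) b')
    (sSup_r : ∀ (S : Set X) b, r (sSup S) b = ⨆ x ∈ S, r x b)
    (r_sSup : ∀ x (S : Set B), r x (sSup S) = ⨆ b ∈ S, r x b)
    (comm : ∀ a x b, r (l a x) b = l a (r x b))
    -- `X` is m-regular:
    (essXl : ∀ x : X, ∃ S : Set (A × X), x = ⨆ t ∈ S, l t.1 t.2)
    (sepXl : ∀ x x' : X, (∀ a, l a x = l a x') → x = x')
    (essXr : ∀ x : X, ∃ S : Set (X × B), x = ⨆ t ∈ S, r t.1 t.2)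
    (sepXr : ∀ x x' : X, (∀ b, r x b = r x' b) → x = x')
    -- `(A, X, _A⟨−,−⟩)` is a full Hilbert module:
    (sSup_ipA : ∀ (S : Set X) y, ipA (sSup S) y = ⨆ x ∈ S, ipA x y)
    (ipA_sSup : ∀ x (S : Set X), ipA x (sSup S) = ⨆ y ∈ S, ipA x y)
    (ipA_l : ∀ a x y, ipA (l a x) y = mulA a (ipA x y))
    (ipA_star : ∀ x y, starA (ipA x y) = ipA y x)
    (ipA_full : ∀ a : A, ∃ S : Set (X × X), a = ⨆ t ∈ S, ipA t.1 t.2)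
    -- `(B, X, ⟨−,−⟩_B)` is a full Hilbert module:
    (sSup_ipB : ∀ (S : Set X) y, ipB (sSup S) y = ⨆ x ∈ S, ipB x y)
    (ipB_sSup : ∀ x (S : Set X), ipB x (sSup S) = ⨆ y ∈ S, ipB x y)
    (ipB_r : ∀ x y b, ipB x (r y b) = mulB (ipB x y) b)
    (ipB_star : ∀ x y, starB (ipB x y) = ipB y x)
    (ipB_full : ∀ b : B, ∃ S : Set (X × X), b = ⨆ t ∈ S, ipB t.1 t.2)
    -- the compatibility condition `_A⟨x,y⟩·z = x·⟨y,z⟩_B`: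
    (compat : ∀ x y z, l (ipA x y) z = r x (ipB y z)) :
    -- conclusion: `(A, B, X, X*, (−,−), [−,−])` is a Morita context, where
    -- `X* = X`, `b·x* = (x·b*)*`, `x*·a = (a*·x)*`, `(x,y*) = _A⟨x,y⟩`,
    -- `[x*,y] = ⟨x,y⟩_B`:
    IsMoritaContext
      (⟨mulA, mulB, l, r,
        fun b y => r y (starB b), fun y a => l (starA a) y,
        ipA, ipB⟩ : MoritaData A B X X) := by

  -- derived inner-product lemmas
  have ipA_r' : ∀ x a y, ipA x (l a y) = mulA (ipA x y) (starA a) := by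
    intro x a y
    rw [← ipA_star (l a y) x, ipA_l, starA_mul, ipA_star]
  have ipB_l' : ∀ y b x, ipB (r y b) x = mulB (starB b) (ipB y x) := by
    intro y b x
    rw [← ipB_star x (r y b), ipB_r, starB_mul, ipB_star]
  -- separation lemmas
  have sepAl' : ∀ a a' : A, (∀ z, l a z = l a' z) → a = a' := by
    intro a a' h
    apply lsepA
    intro c
    obtain ⟨S, hS⟩ := ipA_full c
    have key : ∀ u : A, mulA u (⨆ t ∈ S, ipA t.1 t.2) = ⨆ t ∈ S, ipA (l u t.1) t.2 := by
      intro u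
      rw [← sSup_image, mulA_sSup, iSup_image]
      simp only [ipA_l]
    rw [hS, key, key]
    simp only [h]
  have sepBr' : ∀ b b' : B, (∀ z, r z b = r z b') → b = b' := by
    intro b b' h
    apply rsepB
    intro c
    obtain ⟨S, hS⟩ := ipB_full c
    have key : ∀ u : B, mulB (⨆ t ∈ S, ipB t.1 t.2) u = ⨆ t ∈ S, ipB t.1 (r t.2 u) := by
      intro u
      rw [← sSup_image, sSup_mulB, iSup_image]
      simp only [ipB_r]
    rw [hS, key, key]
    simp only [h]
  refine
    { mulA_assoc := mulA_assoc
      sSup_mulA := sSup_mulA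
      mulA_sSup := mulA_sSup
      mulB_assoc := mulB_assoc
      sSup_mulB := sSup_mulB
      mulB_sSup := mulB_sSup
      essA := essA
      lsepA := lsepA
      rsepA := rsepA
      essB := essB
      lsepB := lsepB
      rsepB := rsepB
      actAX_mul := l_mul
      sSup_actAX := sSup_l
      actAX_sSup := l_sSup
      actXB_mul := r_mul
      sSup_actXB := sSup_r
      actXB_sSup := r_sSup
      commX := comm
      essXl := essXl
      sepXl := sepXl
      essXr := essXr
      sepXr := sepXr
      actBY_mul := fun b b' y => by
        simp only []
        rw [starB_mul, r_mul]
      sSup_actBY := fun S y => by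
        simp only []
        rw [starB_sSup, ← sSup_image, r_sSup, iSup_image]
      actBY_sSup := fun b S => by
        simp only []
        exact sSup_r S (starB b)
      actYA_mul := fun y a a' => by
        simp only []
        rw [starA_mul, l_mul]
      sSup_actYA := fun S a => by
        simp only []
        exact l_sSup (starA a) S
      actYA_sSup := fun y S => by
        simp only []
        rw [starA_sSup, ← sSup_image, sSup_l, iSup_image]
      commY := fun b y a => (comm (starA a) y (starB b)).symm
      essYl := fun y => by
        obtain ⟨S, hS⟩ := essXr y
        refine ⟨(fun t => (starB t.2, t.1)) '' S, ?_⟩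
        simp only []
        rw [iSup_image]
        simpa only [starB_starB] using hS
      sepYl := fun y y' h => by
        apply sepXr
        intro b
        have := h (starB b)
        simpa only [starB_starB] using this
      essYr := fun y => by
        obtain ⟨S, hS⟩ := essXl y
        refine ⟨(fun t => (t.2, starA t.1)) '' S, ?_⟩
        simp only []
        rw [iSup_image]
        simpa only [starA_starA] using hS
      sepYr := fun y y' h => by
        apply sepXl
        intro a
        have := h (starA a)
        simpa only [starA_starA] using this
      sSup_prA := sSup_ipA
      prA_sSup := ipA_sSup
      sSup_prB := sSup_ipB
      prB_sSup := ipB_sSup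
      prA_actA := ipA_l
      prA_actY := fun x y a => by
        simp only []
        rw [ipA_r', starA_starA]
      prB_actB := fun b y x => by
        simp only []
        rw [ipB_l', starB_starB]
      prB_actX := fun y x b => ipB_r y x b
      prA_bal := fun x b y => by
        simp only []
        apply sepAl'
        intro z
        rw [compat, compat, ipB_l', starB_starB, r_mul]
      prB_bal := fun y a x => by
        simp only []
        apply sepBr'
        intro z
        rw [← compat, ← compat, ipA_r', starA_starA, l_mul]
      link₁ := compat
      link₂ := fun y₁ x y₂ => by
        simp only []
        rw [ipB_star, ipA_star, compat]
      surjA := ipA_full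
      surjB := ipB_full }
end

section
/- Let X and Y be complete lattices with surjective sup-preserving maps p : X⊗Y⊗X → X and q : Y⊗X⊗Y → Y satisfying conditions (1)-(6) of the Morita pair characterization. Let L = {L_a : a ∈ X⊗Y} and R = {R_b : b ∈ Y⊗X} with L_a(x) = p(a⊗x), R_b(y) = q(b⊗y). Then X becomes an L,R-bimodule via L_a · x = p(a⊗x) and x · R_b = p(x⊗b): the left and right actions each satisfy the module axioms and commute with each other. -/
section helpers
variable {α β γ δ : Type*} [CompleteLattice α] [CompleteLattice β]
    [CompleteLattice γ] [CompleteLattice δ] {p : α → β → γ → δ}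

lemma tri1 (hp : TriSupPreserving p) {ι : Type*} (T : Set ι) (g : ι → α)
    (y : β) (z : γ) : p (⨆ i ∈ T, g i) y z = ⨆ i ∈ T, p (g i) y z := by
  rw [← sSup_image, hp.1, iSup_image]

lemma tri2 (hp : TriSupPreserving p) {ι : Type*} (T : Set ι) (g : ι → β)
    (x : α) (z : γ) : p x (⨆ i ∈ T, g i) z = ⨆ i ∈ T, p x (g i) z := by
  rw [← sSup_image, hp.2.1, iSup_image]

lemma tri3 (hp : TriSupPreserving p) {ι : Type*} (T : Set ι) (g : ι → γ)
    (x : α) (y : β) : p x y (⨆ i ∈ T, g i) = ⨆ i ∈ T, p x y (g i) := by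
  rw [← sSup_image, hp.2.2, iSup_image]

lemma biSup_sUnion' {ι : Type*} (𝒯 : Set (Set ι)) (f : ι → δ) :
    (⨆ t ∈ ⋃₀ 𝒯, f t) = ⨆ T ∈ 𝒯, ⨆ t ∈ T, f t := by
  apply le_antisymm
  · refine iSup₂_le fun t ht => ?_
    obtain ⟨T, hT, htT⟩ := ht
    exact le_iSup₂_of_le T hT (le_iSup₂_of_le t htT le_rfl)
  · exact iSup₂_le fun T hT => iSup₂_le fun t ht => le_iSup₂_of_le t ⟨T, hT, ht⟩ le_rfl

lemma biSup_comm' {ι κ : Type*} (S : Set ι) (T : Set κ) (f : ι → κ → δ) :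
    (⨆ i ∈ S, ⨆ j ∈ T, f i j) = ⨆ j ∈ T, ⨆ i ∈ S, f i j := by
  apply le_antisymm <;>
    exact iSup₂_le fun i hi => iSup₂_le fun j hj =>
      le_iSup₂_of_le j hj (le_iSup₂_of_le i hi le_rfl)

end helpers

/-- under conditions (1)-(6), `X` becomes an `L,R`-bimodule via
`L_a · x = p(a⊗x)` and `x · R_b = p(x⊗b)`.  Elements `a ∈ X⊗Y` are the
operators in `Lset p`; elements `b ∈ Y⊗X` are represented by sets
`T : Set (Y × X)` of simple tensors, the operator `R_b` being
`w ↦ ⨆ t ∈ T, q t.1 t.2 w` and the right action `x ↦ ⨆ t ∈ T, p x t.1 t.2`. -/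
theorem bimodule_structure {X Y : Type*} [CompleteLattice X] [CompleteLattice Y]
    (p : X → Y → X → X) (q : Y → X → Y → Y)
    (hp : TriSupPreserving p) (hq : TriSupPreserving q)
    (psurj : ∀ x : X, ∃ S : Set (X × Y × X), x = ⨆ t ∈ S, p t.1 t.2.1 t.2.2)
    (qsurj : ∀ y : Y, ∃ S : Set (Y × X × Y), y = ⨆ t ∈ S, q t.1 t.2.1 t.2.2)
    (c1a : ∀ (x₁ x₂ x₃ : X) (y₁ y₂ : Y),
      p (p x₁ y₁ x₂) y₂ x₃ = p x₁ (q y₁ x₂ y₂) x₃)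
    (c1b : ∀ (x₁ x₂ x₃ : X) (y₁ y₂ : Y),
      p (p x₁ y₁ x₂) y₂ x₃ = p x₁ y₁ (p x₂ y₂ x₃))
    (c2a : ∀ (y₁ y₂ y₃ : Y) (x₁ x₂ : X),
      q (q y₁ x₁ y₂) x₂ y₃ = q y₁ (p x₁ y₂ x₂) y₃)
    (c2b : ∀ (y₁ y₂ y₃ : Y) (x₁ x₂ : X),
      q (q y₁ x₁ y₂) x₂ y₃ = q y₁ x₁ (q y₂ x₂ y₃))
    (c3 : ∀ x₁ x₂ : X, (∀ (x : X) (y : Y), p x y x₁ = p x y x₂) → x₁ = x₂)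
    (c4 : ∀ x₁ x₂ : X, (∀ (y : Y) (x : X), p x₁ y x = p x₂ y x) → x₁ = x₂)
    (c5 : ∀ y₁ y₂ : Y, (∀ (y : Y) (x : X), q y x y₁ = q y x y₂) → y₁ = y₂)
    (c6 : ∀ y₁ y₂ : Y, (∀ (x : X) (y : Y), q y₁ x y = q y₂ x y) → y₁ = y₂) :
    -- the right action `x · R_b` is well defined (depends only on the operator `R_b`):
    (∀ T T' : Set (Y × X),
      ((fun w => ⨆ t ∈ T, q t.1 t.2 w) = fun w => ⨆ t ∈ T', q t.1 t.2 w) →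
      (fun x => ⨆ t ∈ T, p x t.1 t.2) = fun x => ⨆ t ∈ T', p x t.1 t.2) ∧
    -- left action axioms: `(f·g)·x = f·(g·x)` for `f, g ∈ L` (multiplication
    -- in `L` is composition, the action is application),
    (∀ f ∈ Lset p, ∀ g ∈ Lset p, ∀ x : X, (f ∘ g) x = f (g x)) ∧
    -- the left action preserves joins in the module variable,
    (∀ f ∈ Lset p, ∀ S : Set X, f (sSup S) = ⨆ x ∈ S, f x) ∧
    -- and in the quantale variable (joins in `L` are pointwise),
    (∀ T : Set (X → X), T ⊆ Lset p → ∀ x : X,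
      (fun z => ⨆ f ∈ T, f z) x = ⨆ f ∈ T, f x) ∧
    -- right action axiom: `(x·a)·b = x·(a·b)`, the product `R_a ∘ R_b` of the
    -- operators represented by `T`, `T'` being represented by
    -- `{(q t₁ t₂ s₁, s₂) : (t₁,t₂) ∈ T, (s₁,s₂) ∈ T'}`:
    (∀ (x : X) (T T' : Set (Y × X)),
      (⨆ s ∈ T', p (⨆ t ∈ T, p x t.1 t.2) s.1 s.2) =
        ⨆ u ∈ (fun ts : (Y × X) × (Y × X) =>
          (q ts.1.1 ts.1.2 ts.2.1, ts.2.2)) '' (T ×ˢ T'), p x u.1 u.2) ∧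
    -- the right action preserves joins in the module variable,
    (∀ (S : Set X) (T : Set (Y × X)),
      (⨆ t ∈ T, p (sSup S) t.1 t.2) = ⨆ x ∈ S, ⨆ t ∈ T, p x t.1 t.2) ∧
    -- and in the quantale variable (a join in `R` is represented by the union
    -- of representing sets),
    (∀ (x : X) (𝒯 : Set (Set (Y × X))),
      (⨆ t ∈ ⋃₀ 𝒯, p x t.1 t.2) = ⨆ T ∈ 𝒯, ⨆ t ∈ T, p x t.1 t.2) ∧
    -- the left and right actions commute:
    (∀ f ∈ Lset p, ∀ (x : X) (T : Set (Y × X)),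
      f (⨆ t ∈ T, p x t.1 t.2) = ⨆ t ∈ T, p (f x) t.1 t.2) := by
  refine ⟨?_, ?_, ?_, ?_, ?_, ?_, ?_, ?_⟩
  · intro T T' h
    funext x
    apply c4
    intro y z
    have key : ∀ U : Set (Y × X),
        p (⨆ t ∈ U, p x t.1 t.2) y z = p x (⨆ t ∈ U, q t.1 t.2 y) z := by
      intro U
      rw [tri1 hp, tri2 hp]
      simp only [c1a]
    rw [key, key, show (⨆ t ∈ T, q t.1 t.2 y) = ⨆ t ∈ T', q t.1 t.2 y from
      congrFun h y]
  · intro f _ g _ x; rfl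
  · rintro f ⟨S, rfl⟩ S'
    simp only [hp.2.2]
    exact biSup_comm' _ _ _
  · intro T _ x; rfl
  · intro x T T'
    rw [iSup_image, biSup_prod]
    simp only [tri1 hp, c1a]
    exact biSup_comm' _ _ _
  · intro S T
    simp only [hp.1]
    exact biSup_comm' _ _ _
  · intro x 𝒯
    exact biSup_sUnion' _ _
  · rintro f ⟨S, rfl⟩ x T
    simp only [tri3 hp, ← c1b, tri1 hp]
    exact biSup_comm' _ _ _
end

section
/- Let X and Y be join semilattices (with bottom element) and suppose there exist surjective join-semilattice morphisms p : X⊗Y⊗X → X and q : Y⊗X⊗Y → Y (where ⊗ is the join-semilattice tensor product) satisfying: (1) p(p(x₁⊗y₁⊗x₂)⊗y₂⊗x₃) = p(x₁⊗q(y₁⊗x₂⊗y₂)⊗x₃) = p(x₁⊗y₁⊗p(x₂⊗y₂⊗x₃)); (2) the symmetric identities for q; (3)-(6) left and right separation for p and q. Then (X,Y) is a Morita equivalence pair between some m-regular m-semilattices. -/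
set_option linter.unusedSectionVars false


universe u

/-- A map encoded, via the universal property of the join-semilattice tensor
product, as a map preserving finite joins (binary joins and bottom) in each
variable. -/
def TriFinJoinPreserving {α β γ δ : Type u}
    [SemilatticeSup α] [OrderBot α] [SemilatticeSup β] [OrderBot β]
    [SemilatticeSup γ] [OrderBot γ] [SemilatticeSup δ] [OrderBot δ]
    (p : α → β → γ → δ) : Prop :=
  (∀ x x' y z, p (x ⊔ x') y z = p x y z ⊔ p x' y z) ∧
  (∀ y z, p ⊥ y z = ⊥) ∧
  (∀ x y y' z, p x (y ⊔ y') z = p x y z ⊔ p x y' z) ∧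
  (∀ x z, p x ⊥ z = ⊥) ∧
  (∀ x y z z', p x y (z ⊔ z') = p x y z ⊔ p x y z') ∧
  (∀ x y, p x y ⊥ = ⊥)

/-- An m-semilattice (ω-quantale): a join semilattice with bottom. -/
class SemilatticeSupBot (A : Type u) extends SemilatticeSup A, OrderBot A

/-- The data of a Morita context between m-semilattices `A` and `B` with
equivalence bimodules `X` and `Y`. -/
structure MoritaDataFin (A B X Y : Type u)
    [SemilatticeSupBot A] [SemilatticeSupBot B]
    [SemilatticeSupBot X] [SemilatticeSupBot Y] where
  mulA : A → A → A
  mulB : B → B → B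
  actAX : A → X → X
  actXB : X → B → X
  actBY : B → Y → Y
  actYA : Y → A → Y
  prA : X → Y → A
  prB : Y → X → B

/-- The axioms of a Morita context between m-regular m-semilattices:
everything as for quantales, with finite joins throughout. -/
structure IsMoritaContextFin {A B X Y : Type u}
    [SemilatticeSupBot A] [SemilatticeSupBot B]
    [SemilatticeSupBot X] [SemilatticeSupBot Y]
    (d : MoritaDataFin A B X Y) : Prop where
  -- `A` and `B` are m-semilattices:
  mulA_assoc : ∀ a b c, d.mulA (d.mulA a b) c = d.mulA a (d.mulA b c)
  sup_mulA : ∀ a a' b, d.mulA (a ⊔ a') b = d.mulA a b ⊔ d.mulA a' b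
  bot_mulA : ∀ a, d.mulA ⊥ a = ⊥
  mulA_sup : ∀ a b b', d.mulA a (b ⊔ b') = d.mulA a b ⊔ d.mulA a b'
  mulA_bot : ∀ a, d.mulA a ⊥ = ⊥
  mulB_assoc : ∀ a b c, d.mulB (d.mulB a b) c = d.mulB a (d.mulB b c)
  sup_mulB : ∀ a a' b, d.mulB (a ⊔ a') b = d.mulB a b ⊔ d.mulB a' b
  bot_mulB : ∀ a, d.mulB ⊥ a = ⊥
  mulB_sup : ∀ a b b', d.mulB a (b ⊔ b') = d.mulB a b ⊔ d.mulB a b'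
  mulB_bot : ∀ a, d.mulB a ⊥ = ⊥
  -- `A` and `B` are m-regular:
  essA : ∀ a : A, ∃ s : Finset (A × A), a = s.sup fun t => d.mulA t.1 t.2
  lsepA : ∀ a b : A, (∀ x, d.mulA a x = d.mulA b x) → a = b
  rsepA : ∀ a b : A, (∀ x, d.mulA x a = d.mulA x b) → a = b
  essB : ∀ b : B, ∃ s : Finset (B × B), b = s.sup fun t => d.mulB t.1 t.2
  lsepB : ∀ a b : B, (∀ x, d.mulB a x = d.mulB b x) → a = b
  rsepB : ∀ a b : B, (∀ x, d.mulB x a = d.mulB x b) → a = b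
  -- `X` is an `A,B`-bimodule:
  actAX_mul : ∀ a a' x, d.actAX (d.mulA a a') x = d.actAX a (d.actAX a' x)
  sup_actAX : ∀ a a' x, d.actAX (a ⊔ a') x = d.actAX a x ⊔ d.actAX a' x
  bot_actAX : ∀ x, d.actAX ⊥ x = ⊥
  actAX_sup : ∀ a x x', d.actAX a (x ⊔ x') = d.actAX a x ⊔ d.actAX a x'
  actAX_bot : ∀ a, d.actAX a ⊥ = ⊥
  actXB_mul : ∀ x b b', d.actXB x (d.mulB b b') = d.actXB (d.actXB x b) b'
  sup_actXB : ∀ x x' b, d.actXB (x ⊔ x') b = d.actXB x b ⊔ d.actXB x' b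
  bot_actXB : ∀ b, d.actXB ⊥ b = ⊥
  actXB_sup : ∀ x b b', d.actXB x (b ⊔ b') = d.actXB x b ⊔ d.actXB x b'
  actXB_bot : ∀ x, d.actXB x ⊥ = ⊥
  commX : ∀ a x b, d.actXB (d.actAX a x) b = d.actAX a (d.actXB x b)
  -- `X` is m-regular:
  essXl : ∀ x : X, ∃ s : Finset (A × X), x = s.sup fun t => d.actAX t.1 t.2
  sepXl : ∀ x x' : X, (∀ a, d.actAX a x = d.actAX a x') → x = x'
  essXr : ∀ x : X, ∃ s : Finset (X × B), x = s.sup fun t => d.actXB t.1 t.2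
  sepXr : ∀ x x' : X, (∀ b, d.actXB x b = d.actXB x' b) → x = x'
  -- `Y` is a `B,A`-bimodule:
  actBY_mul : ∀ b b' y, d.actBY (d.mulB b b') y = d.actBY b (d.actBY b' y)
  sup_actBY : ∀ b b' y, d.actBY (b ⊔ b') y = d.actBY b y ⊔ d.actBY b' y
  bot_actBY : ∀ y, d.actBY ⊥ y = ⊥
  actBY_sup : ∀ b y y', d.actBY b (y ⊔ y') = d.actBY b y ⊔ d.actBY b y'
  actBY_bot : ∀ b, d.actBY b ⊥ = ⊥
  actYA_mul : ∀ y a a', d.actYA y (d.mulA a a') = d.actYA (d.actYA y a) a'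
  sup_actYA : ∀ y y' a, d.actYA (y ⊔ y') a = d.actYA y a ⊔ d.actYA y' a
  bot_actYA : ∀ a, d.actYA ⊥ a = ⊥
  actYA_sup : ∀ y a a', d.actYA y (a ⊔ a') = d.actYA y a ⊔ d.actYA y a'
  actYA_bot : ∀ y, d.actYA y ⊥ = ⊥
  commY : ∀ b y a, d.actYA (d.actBY b y) a = d.actBY b (d.actYA y a)
  -- `Y` is m-regular:
  essYl : ∀ y : Y, ∃ s : Finset (B × Y), y = s.sup fun t => d.actBY t.1 t.2
  sepYl : ∀ y y' : Y, (∀ b, d.actBY b y = d.actBY b y') → y = y'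
  essYr : ∀ y : Y, ∃ s : Finset (Y × A), y = s.sup fun t => d.actYA t.1 t.2
  sepYr : ∀ y y' : Y, (∀ a, d.actYA y a = d.actYA y' a) → y = y'
  -- the pairings preserve finite joins in each variable:
  sup_prA : ∀ x x' y, d.prA (x ⊔ x') y = d.prA x y ⊔ d.prA x' y
  bot_prA : ∀ y, d.prA ⊥ y = ⊥
  prA_sup : ∀ x y y', d.prA x (y ⊔ y') = d.prA x y ⊔ d.prA x y'
  prA_bot : ∀ x, d.prA x ⊥ = ⊥
  sup_prB : ∀ y y' x, d.prB (y ⊔ y') x = d.prB y x ⊔ d.prB y' x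
  bot_prB : ∀ x, d.prB ⊥ x = ⊥
  prB_sup : ∀ y x x', d.prB y (x ⊔ x') = d.prB y x ⊔ d.prB y x'
  prB_bot : ∀ y, d.prB y ⊥ = ⊥
  -- the pairings are bimodule maps:
  prA_actA : ∀ a x y, d.prA (d.actAX a x) y = d.mulA a (d.prA x y)
  prA_actY : ∀ x y a, d.prA x (d.actYA y a) = d.mulA (d.prA x y) a
  prB_actB : ∀ b y x, d.prB (d.actBY b y) x = d.mulB b (d.prB y x)
  prB_actX : ∀ y x b, d.prB y (d.actXB x b) = d.mulB (d.prB y x) b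
  -- the pairings are balanced:
  prA_bal : ∀ x b y, d.prA (d.actXB x b) y = d.prA x (d.actBY b y)
  prB_bal : ∀ y a x, d.prB (d.actYA y a) x = d.prB y (d.actAX a x)
  -- the linking identities:
  link₁ : ∀ x₁ y x₂, d.actAX (d.prA x₁ y) x₂ = d.actXB x₁ (d.prB y x₂)
  link₂ : ∀ y₁ x y₂, d.actBY (d.prB y₁ x) y₂ = d.actYA y₁ (d.prA x y₂)
  -- the induced maps on tensor products are surjective:
  surjA : ∀ a : A, ∃ s : Finset (X × Y), a = s.sup fun t => d.prA t.1 t.2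
  surjB : ∀ b : B, ∃ s : Finset (Y × X), b = s.sup fun t => d.prB t.1 t.2

namespace MoritaFinAux

/-- pointwise sup distributes over `Finset.sup`. -/
lemma sup_pointwise {ι α : Type u} [SemilatticeSup α] [OrderBot α]
    (s : Finset ι) (f g : ι → α) :
    s.sup (fun i => f i ⊔ g i) = s.sup f ⊔ s.sup g := Finset.sup_sup

lemma sup_fst_apply {ι α β : Type u} [SemilatticeSup α] [OrderBot α]
    [SemilatticeSup β] [OrderBot β] (s : Finset ι) (F : ι → (α → α) × β) (z : α) :
    (s.sup F).1 z = s.sup fun i => (F i).1 z :=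
  Finset.comp_sup_eq_sup_comp (fun v : (α → α) × β => v.1 z) (fun _ _ => rfl) rfl

lemma sup_snd_apply {ι α β : Type u} [SemilatticeSup α] [OrderBot α]
    [SemilatticeSup β] [OrderBot β] (s : Finset ι) (F : ι → α × (β → β)) (z : β) :
    (s.sup F).2 z = s.sup fun i => (F i).2 z :=
  Finset.comp_sup_eq_sup_comp (fun v : α × (β → β) => v.2 z) (fun _ _ => rfl) rfl

section PQ

variable {X Y : Type u} [SemilatticeSupBot X] [SemilatticeSupBot Y]
variable (p : X → Y → X → X) (q : Y → X → Y → Y)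

/-- the generator of `A` associated to a pair `(x, y)`. -/
def gen : X × Y → (X → X) × (Y → Y) :=
  fun t => (fun z => p t.1 t.2 z, fun w => q w t.1 t.2)

/-- membership in `A`: finite joins of generators. -/
def PP (v : (X → X) × (Y → Y)) : Prop := ∃ s : Finset (X × Y), v = s.sup (gen p q)

/-- the multiplication of `A` (composition in each component). -/
def mulP (v w : (X → X) × (Y → Y)) : (X → X) × (Y → Y) := (v.1 ∘ w.1, w.2 ∘ v.2)

variable {p q}

lemma PP_bot : PP p q ⊥ := ⟨∅, (Finset.sup_empty).symm⟩

lemma PP_sup {v w} (hv : PP p q v) (hw : PP p q w) : PP p q (v ⊔ w) := by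
  classical
  obtain ⟨s, rfl⟩ := hv; obtain ⟨t, rfl⟩ := hw
  exact ⟨s ∪ t, (Finset.sup_union).symm⟩

lemma PP_gen (t : X × Y) : PP p q (gen p q t) := ⟨{t}, (Finset.sup_singleton).symm⟩

section withhyps
variable (hp : TriFinJoinPreserving p) (hq : TriFinJoinPreserving q)

include hp in
lemma mem_fst_sup {v} (hv : PP p q v) (x x' : X) : v.1 (x ⊔ x') = v.1 x ⊔ v.1 x' := by
  obtain ⟨s, rfl⟩ := hv
  rw [sup_fst_apply, sup_fst_apply, sup_fst_apply, ← sup_pointwise]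
  exact Finset.sup_congr rfl fun t _ => hp.2.2.2.2.1 t.1 t.2 x x'

include hp in
lemma mem_fst_bot {v} (hv : PP p q v) : v.1 ⊥ = ⊥ := by
  obtain ⟨s, rfl⟩ := hv
  rw [sup_fst_apply]
  exact le_antisymm (Finset.sup_le fun t _ => (hp.2.2.2.2.2 t.1 t.2).le) bot_le

include hq in
lemma mem_snd_sup {v} (hv : PP p q v) (w w' : Y) : v.2 (w ⊔ w') = v.2 w ⊔ v.2 w' := by
  obtain ⟨s, rfl⟩ := hv
  rw [sup_snd_apply, sup_snd_apply, sup_snd_apply, ← sup_pointwise]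
  exact Finset.sup_congr rfl fun t _ => hq.1 w w' t.1 t.2

include hq in
lemma mem_snd_bot {v} (hv : PP p q v) : v.2 ⊥ = ⊥ := by
  obtain ⟨s, rfl⟩ := hv
  rw [sup_snd_apply]
  exact le_antisymm (Finset.sup_le fun t _ => (hq.2.1 t.1 t.2).le) bot_le

include hp in
lemma mem_fst_supF {v} (hv : PP p q v) {ι : Type u} (s : Finset ι) (f : ι → X) :
    v.1 (s.sup f) = s.sup fun i => v.1 (f i) :=
  Finset.comp_sup_eq_sup_comp v.1 (mem_fst_sup hp hv) (mem_fst_bot hp hv)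

include hq in
lemma mem_snd_supF {v} (hv : PP p q v) {ι : Type u} (s : Finset ι) (f : ι → Y) :
    v.2 (s.sup f) = s.sup fun i => v.2 (f i) :=
  Finset.comp_sup_eq_sup_comp v.2 (mem_snd_sup hq hv) (mem_snd_bot hq hv)

include hp hq in
lemma gen_sup₁ (x x' : X) (y : Y) :
    gen p q (x ⊔ x', y) = gen p q (x, y) ⊔ gen p q (x', y) :=
  Prod.ext (funext fun z => hp.1 x x' y z) (funext fun w => hq.2.2.1 w x x' y)

include hp hq in
lemma gen_bot₁ (y : Y) : gen p q (⊥, y) = ⊥ :=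
  Prod.ext (funext fun z => hp.2.1 y z) (funext fun w => hq.2.2.2.1 w y)

include hp hq in
lemma gen_sup₂ (x : X) (y y' : Y) :
    gen p q (x, y ⊔ y') = gen p q (x, y) ⊔ gen p q (x, y') :=
  Prod.ext (funext fun z => hp.2.2.1 x y y' z) (funext fun w => hq.2.2.2.2.1 w x y y')

include hp hq in
lemma gen_bot₂ (x : X) : gen p q (x, ⊥) = ⊥ :=
  Prod.ext (funext fun z => hp.2.2.2.1 x z) (funext fun w => hq.2.2.2.2.2 w x)

variable (ca : ∀ (x₁ x₂ x₃ : X) (y₁ y₂ : Y),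
      p (p x₁ y₁ x₂) y₂ x₃ = p x₁ (q y₁ x₂ y₂) x₃)
variable (cb : ∀ (x₁ x₂ x₃ : X) (y₁ y₂ : Y),
      p (p x₁ y₁ x₂) y₂ x₃ = p x₁ y₁ (p x₂ y₂ x₃))
variable (cc : ∀ (y₁ y₂ y₃ : Y) (x₁ x₂ : X),
      q (q y₁ x₁ y₂) x₂ y₃ = q y₁ (p x₁ y₂ x₂) y₃)
variable (cd : ∀ (y₁ y₂ y₃ : Y) (x₁ x₂ : X),
      q (q y₁ x₁ y₂) x₂ y₃ = q y₁ x₁ (q y₂ x₂ y₃))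

include cb cc in
lemma gen_mul (t t' : X × Y) :
    mulP (gen p q t) (gen p q t') = gen p q (p t.1 t.2 t'.1, t'.2) :=
  Prod.ext (funext fun z => (cb t.1 t'.1 z t.2 t'.2).symm)
    (funext fun w => cc w t.2 t'.2 t.1 t'.1)

include hp hq cb cc in
lemma PP_mul {v w} (hv : PP p q v) (hw : PP p q w) : PP p q (mulP v w) := by
  classical
  obtain ⟨s, rfl⟩ := hv; obtain ⟨s', rfl⟩ := hw
  refine ⟨(s ×ˢ s').image fun t => (p t.1.1 t.1.2 t.2.1, t.2.2), ?_⟩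
  rw [Finset.sup_image, Finset.sup_product_left]
  set G := gen p q with hG
  set f : (X × Y) × X × Y → X × Y := fun t => (p t.1.1 t.1.2 t.2.1, t.2.2) with hf
  refine Prod.ext (funext fun z => ?_) (funext fun w => ?_)
  · show (s.sup G).1 ((s'.sup G).1 z) = _
    calc (s.sup G).1 ((s'.sup G).1 z)
        = (s.sup G).1 (s'.sup fun i => (G i).1 z) :=
          congrArg (s.sup G).1 (sup_fst_apply s' G z)
      _ = s'.sup (fun i => (s.sup G).1 ((G i).1 z)) :=
          mem_fst_supF hp ⟨s, congrArg s.sup hG⟩ s' _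
      _ = s'.sup (fun i => s.sup fun t => (G t).1 ((G i).1 z)) :=
          Finset.sup_congr rfl fun i _ => sup_fst_apply s G ((G i).1 z)
      _ = s.sup (fun t => s'.sup fun i => (G t).1 ((G i).1 z)) :=
          Finset.sup_comm s' s _
      _ = s.sup (fun t => s'.sup fun i => ((G ∘ f) (t, i)).1 z) :=
          Finset.sup_congr rfl fun t _ => Finset.sup_congr rfl fun i _ =>
            (cb t.1 i.1 z t.2 i.2).symm
      _ = (s.sup fun t => s'.sup fun i => (G ∘ f) (t, i)).1 z := by
          rw [sup_fst_apply s (fun t => s'.sup fun i => (G ∘ f) (t, i)) z]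
          exact Finset.sup_congr rfl fun t _ =>
            (sup_fst_apply s' (fun i => (G ∘ f) (t, i)) z).symm
  · show (s'.sup G).2 ((s.sup G).2 w) = _
    calc (s'.sup G).2 ((s.sup G).2 w)
        = (s'.sup G).2 (s.sup fun i => (G i).2 w) :=
          congrArg (s'.sup G).2 (sup_snd_apply s G w)
      _ = s.sup (fun i => (s'.sup G).2 ((G i).2 w)) :=
          mem_snd_supF hq ⟨s', congrArg s'.sup hG⟩ s _
      _ = s.sup (fun i => s'.sup fun t => (G t).2 ((G i).2 w)) :=
          Finset.sup_congr rfl fun i _ => sup_snd_apply s' G ((G i).2 w)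
      _ = s.sup (fun t => s'.sup fun i => ((G ∘ f) (t, i)).2 w) :=
          Finset.sup_congr rfl fun t _ => Finset.sup_congr rfl fun i _ =>
            cc w t.2 i.2 t.1 i.1
      _ = (s.sup fun t => s'.sup fun i => (G ∘ f) (t, i)).2 w := by
          rw [sup_snd_apply s (fun t => s'.sup fun i => (G ∘ f) (t, i)) w]
          exact Finset.sup_congr rfl fun t _ =>
            (sup_snd_apply s' (fun i => (G ∘ f) (t, i)) w).symm

include hq in
lemma sup_mulP {v} (hv : PP p q v) (u u' : (X → X) × (Y → Y)) :
    mulP (u ⊔ u') v = mulP u v ⊔ mulP u' v :=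
  Prod.ext rfl (funext fun w => mem_snd_sup hq hv (u.2 w) (u'.2 w))

include hq in
lemma bot_mulP {v} (hv : PP p q v) : mulP ⊥ v = ⊥ :=
  Prod.ext rfl (funext fun _ => mem_snd_bot hq hv)

include hp in
lemma mulP_sup {u} (hu : PP p q u) (v v' : (X → X) × (Y → Y)) :
    mulP u (v ⊔ v') = mulP u v ⊔ mulP u v' :=
  Prod.ext (funext fun z => mem_fst_sup hp hu (v.1 z) (v'.1 z)) rfl

include hp in
lemma mulP_bot {u} (hu : PP p q u) : mulP u ⊥ = ⊥ :=
  Prod.ext (funext fun _ => mem_fst_bot hp hu) rfl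

variable (psurj : ∀ x : X, ∃ s : Finset (X × Y × X),
      x = s.sup fun t => p t.1 t.2.1 t.2.2)
variable (qsurj : ∀ y : Y, ∃ s : Finset (Y × X × Y),
      y = s.sup fun t => q t.1 t.2.1 t.2.2)

include hp hq cb cc psurj in
lemma ess_mulP {v} (hv : PP p q v) :
    ∃ s : Finset ((X × Y) × (X × Y)),
      v = s.sup fun t => mulP (gen p q t.1) (gen p q t.2) := by
  classical
  obtain ⟨s, rfl⟩ := hv
  choose F hF using psurj
  refine ⟨s.biUnion fun t => (F t.1).image fun r => ((r.1, r.2.1), (r.2.2, t.2)), ?_⟩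
  rw [Finset.sup_biUnion]
  refine Finset.sup_congr rfl fun t _ => ?_
  obtain ⟨x, y⟩ := t
  rw [Finset.sup_image]
  calc gen p q (x, y)
      = gen p q ((F x).sup (fun r => p r.1 r.2.1 r.2.2), y) := by rw [← hF x]
    _ = (F x).sup fun r => gen p q (p r.1 r.2.1 r.2.2, y) :=
        Finset.comp_sup_eq_sup_comp (fun u => gen p q (u, y))
          (fun a b => gen_sup₁ hp hq a b y) (gen_bot₁ hp hq y)
    _ = (F x).sup fun r => mulP (gen p q (r.1, r.2.1)) (gen p q (r.2.2, y)) :=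
        Finset.sup_congr rfl fun r _ => (gen_mul cb cc (r.1, r.2.1) (r.2.2, y)).symm

include hp psurj in
lemma lsep_fst {v w} (hv : PP p q v) (hw : PP p q w)
    (h : ∀ (x' : X) (y' : Y) (z : X), v.1 (p x' y' z) = w.1 (p x' y' z)) :
    v.1 = w.1 := by
  funext u
  obtain ⟨s, hs⟩ := psurj u
  rw [hs, mem_fst_supF hp hv, mem_fst_supF hp hw]
  exact Finset.sup_congr rfl fun t _ => h t.1 t.2.1 t.2.2

include hq qsurj in
lemma rsep_snd {v w} (hv : PP p q v) (hw : PP p q w)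
    (h : ∀ (x' : X) (y' : Y) (u : Y), v.2 (q u x' y') = w.2 (q u x' y')) :
    v.2 = w.2 := by
  funext u
  obtain ⟨s, hs⟩ := qsurj u
  rw [hs, mem_snd_supF hq hv, mem_snd_supF hq hw]
  exact Finset.sup_congr rfl fun t _ => h t.2.1 t.2.2 t.1

include hp cb in
lemma comm_mix {v w} (hv : PP p q v) (hw : PP q p w) (x : X) :
    w.2 (v.1 x) = v.1 (w.2 x) := by
  obtain ⟨s, rfl⟩ := hv
  obtain ⟨s', rfl⟩ := hw
  calc (s'.sup (gen q p)).2 ((s.sup (gen p q)).1 x)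
      = (s'.sup (gen q p)).2 (s.sup fun t => (gen p q t).1 x) :=
        congrArg _ (sup_fst_apply s (gen p q) x)
    _ = s.sup fun t => (s'.sup (gen q p)).2 ((gen p q t).1 x) :=
        mem_snd_supF hp ⟨s', rfl⟩ s _
    _ = s.sup fun t => s'.sup fun r => (gen q p r).2 ((gen p q t).1 x) :=
        Finset.sup_congr rfl fun t _ => sup_snd_apply s' (gen q p) _
    _ = s.sup fun t => s'.sup fun r => (gen p q t).1 ((gen q p r).2 x) :=
        Finset.sup_congr rfl fun t _ => Finset.sup_congr rfl fun r _ => by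
          show p (p t.1 t.2 x) r.1 r.2 = p t.1 t.2 (p x r.1 r.2)
          exact cb t.1 x r.2 t.2 r.1
    _ = s.sup fun t => (gen p q t).1 ((s'.sup (gen q p)).2 x) :=
        Finset.sup_congr rfl fun t _ => by
          rw [sup_snd_apply s' (gen q p) x]
          exact (Finset.comp_sup_eq_sup_comp (fun u => p t.1 t.2 u)
            (hp.2.2.2.2.1 t.1 t.2) (hp.2.2.2.2.2 t.1 t.2)).symm
    _ = (s.sup (gen p q)).1 ((s'.sup (gen q p)).2 x) :=
        (sup_fst_apply s (gen p q) _).symm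

include hp hq cb cc in
lemma gen_actL {v} (hv : PP p q v) (x : X) (y : Y) :
    gen p q (v.1 x, y) = mulP v (gen p q (x, y)) := by
  obtain ⟨s, rfl⟩ := hv
  refine Prod.ext (funext fun z => ?_) (funext fun w => ?_)
  · show p ((s.sup (gen p q)).1 x) y z = (s.sup (gen p q)).1 (p x y z)
    rw [sup_fst_apply s (gen p q) x, sup_fst_apply s (gen p q) (p x y z),
      Finset.comp_sup_eq_sup_comp (fun u => p u y z) (fun a b => hp.1 a b y z)
        (hp.2.1 y z)]
    exact Finset.sup_congr rfl fun t _ => cb t.1 x z t.2 y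
  · show q w ((s.sup (gen p q)).1 x) y = q ((s.sup (gen p q)).2 w) x y
    rw [sup_fst_apply s (gen p q) x, sup_snd_apply s (gen p q) w,
      Finset.comp_sup_eq_sup_comp (fun u => q w u y) (fun a b => hq.2.2.1 w a b y)
        (hq.2.2.2.1 w y),
      Finset.comp_sup_eq_sup_comp (fun u => q u x y) (fun a b => hq.1 a b x y)
        (hq.2.1 x y)]
    exact Finset.sup_congr rfl fun t _ => (cc w t.2 y t.1 x).symm

include hp hq ca cb cd in
lemma gen_actR {v} (hv : PP p q v) (x : X) (y : Y) :
    gen p q (x, v.2 y) = mulP (gen p q (x, y)) v := by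
  obtain ⟨s, rfl⟩ := hv
  refine Prod.ext (funext fun z => ?_) (funext fun w => ?_)
  · show p x ((s.sup (gen p q)).2 y) z = p x y ((s.sup (gen p q)).1 z)
    rw [sup_snd_apply s (gen p q) y, sup_fst_apply s (gen p q) z,
      Finset.comp_sup_eq_sup_comp (fun u => p x u z) (fun a b => hp.2.2.1 x a b z)
        (hp.2.2.2.1 x z),
      Finset.comp_sup_eq_sup_comp (fun u => p x y u) (hp.2.2.2.2.1 x y)
        (hp.2.2.2.2.2 x y)]
    exact Finset.sup_congr rfl fun t _ => by
      show p x (q y t.1 t.2) z = p x y (p t.1 t.2 z)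
      rw [← ca, cb]
  · show q w x ((s.sup (gen p q)).2 y) = (s.sup (gen p q)).2 (q w x y)
    rw [sup_snd_apply s (gen p q) y, sup_snd_apply s (gen p q) (q w x y),
      Finset.comp_sup_eq_sup_comp (fun u => q w x u) (hq.2.2.2.2.1 w x)
        (hq.2.2.2.2.2 w x)]
    exact Finset.sup_congr rfl fun t _ => (cd w y t.2 x t.1).symm

include hp hq ca cc cd in
lemma gen_bal {w} (hw : PP q p w) (x : X) (y : Y) :
    gen p q (w.2 x, y) = gen p q (x, w.1 y) := by
  obtain ⟨s', rfl⟩ := hw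
  refine Prod.ext (funext fun z => ?_) (funext fun ww => ?_)
  · show p ((s'.sup (gen q p)).2 x) y z = p x ((s'.sup (gen q p)).1 y) z
    rw [sup_snd_apply s' (gen q p) x, sup_fst_apply s' (gen q p) y,
      Finset.comp_sup_eq_sup_comp (fun u => p u y z) (fun a b => hp.1 a b y z)
        (hp.2.1 y z),
      Finset.comp_sup_eq_sup_comp (fun u => p x u z) (fun a b => hp.2.2.1 x a b z)
        (hp.2.2.2.1 x z)]
    exact Finset.sup_congr rfl fun r _ => ca x r.2 z r.1 y
  · show q ww ((s'.sup (gen q p)).2 x) y = q ww x ((s'.sup (gen q p)).1 y)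
    rw [sup_snd_apply s' (gen q p) x, sup_fst_apply s' (gen q p) y,
      Finset.comp_sup_eq_sup_comp (fun u => q ww u y) (fun a b => hq.2.2.1 ww a b y)
        (hq.2.2.2.1 ww y),
      Finset.comp_sup_eq_sup_comp (fun u => q ww x u) (hq.2.2.2.2.1 ww x)
        (hq.2.2.2.2.2 ww x)]
    exact Finset.sup_congr rfl fun r _ =>
      ((cc ww r.1 y x r.2).symm).trans (cd ww r.1 y x r.2)

end withhyps

instance instSSB : SemilatticeSupBot {v : (X → X) × (Y → Y) // PP p q v} :=
  { Subtype.semilatticeSup (fun _ _ ha hb => PP_sup ha hb),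
    Subtype.orderBot PP_bot with }

lemma val_finsetSup {ι : Type u} (s : Finset ι)
    (f : ι → {v : (X → X) × (Y → Y) // PP p q v}) :
    (s.sup f).val = s.sup fun i => (f i).val :=
  Finset.comp_sup_eq_sup_comp Subtype.val (fun _ _ => rfl) rfl

variable (p q) in
def genElt (t : X × Y) : {v : (X → X) × (Y → Y) // PP p q v} :=
  ⟨gen p q t, PP_gen t⟩

end PQ

end MoritaFinAux


open MoritaFinAux in
/-- conditions (1)-(6) on surjective finite-join-preserving
`p`, `q` between join semilattices make `(X,Y)` a Morita equivalence pair
between m-regular m-semilattices. -/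
theorem morita_pair_of_conditions_fin {X Y : Type u}
    [SemilatticeSupBot X] [SemilatticeSupBot Y]
    (p : X → Y → X → X) (q : Y → X → Y → Y)
    (hp : TriFinJoinPreserving p) (hq : TriFinJoinPreserving q)
    -- surjectivity (every element is a finite join of values):
    (psurj : ∀ x : X, ∃ s : Finset (X × Y × X),
      x = s.sup fun t => p t.1 t.2.1 t.2.2)
    (qsurj : ∀ y : Y, ∃ s : Finset (Y × X × Y),
      y = s.sup fun t => q t.1 t.2.1 t.2.2)
    -- condition (1):
    (c1a : ∀ (x₁ x₂ x₃ : X) (y₁ y₂ : Y),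
      p (p x₁ y₁ x₂) y₂ x₃ = p x₁ (q y₁ x₂ y₂) x₃)
    (c1b : ∀ (x₁ x₂ x₃ : X) (y₁ y₂ : Y),
      p (p x₁ y₁ x₂) y₂ x₃ = p x₁ y₁ (p x₂ y₂ x₃))
    -- condition (2):
    (c2a : ∀ (y₁ y₂ y₃ : Y) (x₁ x₂ : X),
      q (q y₁ x₁ y₂) x₂ y₃ = q y₁ (p x₁ y₂ x₂) y₃)
    (c2b : ∀ (y₁ y₂ y₃ : Y) (x₁ x₂ : X),
      q (q y₁ x₁ y₂) x₂ y₃ = q y₁ x₁ (q y₂ x₂ y₃))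
    -- conditions (3)-(6):
    (c3 : ∀ x₁ x₂ : X, (∀ (x : X) (y : Y), p x y x₁ = p x y x₂) → x₁ = x₂)
    (c4 : ∀ x₁ x₂ : X, (∀ (y : Y) (x : X), p x₁ y x = p x₂ y x) → x₁ = x₂)
    (c5 : ∀ y₁ y₂ : Y, (∀ (y : Y) (x : X), q y x y₁ = q y x y₂) → y₁ = y₂)
    (c6 : ∀ y₁ y₂ : Y, (∀ (x : X) (y : Y), q y₁ x y = q y₂ x y) → y₁ = y₂) :
    ∃ (A : Type u) (iA : SemilatticeSupBot A) (B : Type u)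
      (iB : SemilatticeSupBot B)
      (d : @MoritaDataFin A B X Y iA iB _ _),
      @IsMoritaContextFin A B X Y iA iB _ _ d := by
  classical
  refine ⟨{v : (X → X) × (Y → Y) // PP p q v}, inferInstance,
    {v : (Y → Y) × (X → X) // PP q p v}, inferInstance,
    { mulA := fun a b => ⟨mulP a.1 b.1, PP_mul hp hq c1b c2a a.2 b.2⟩
      mulB := fun a b => ⟨mulP a.1 b.1, PP_mul hq hp c2b c1a a.2 b.2⟩
      actAX := fun a x => a.1.1 x
      actXB := fun x b => b.1.2 x
      actBY := fun b y => b.1.1 y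
      actYA := fun y a => a.1.2 y
      prA := fun x y => genElt p q (x, y)
      prB := fun y x => genElt q p (y, x) }, ?_⟩
  refine
    { mulA_assoc := fun a b c => Subtype.ext rfl
      sup_mulA := fun a a' b => Subtype.ext (sup_mulP hq b.2 a.1 a'.1)
      bot_mulA := fun a => Subtype.ext (bot_mulP hq a.2)
      mulA_sup := fun a b b' => Subtype.ext (mulP_sup hp a.2 b.1 b'.1)
      mulA_bot := fun a => Subtype.ext (mulP_bot hp a.2)
      mulB_assoc := fun a b c => Subtype.ext rfl
      sup_mulB := fun a a' b => Subtype.ext (sup_mulP hp b.2 a.1 a'.1)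
      bot_mulB := fun a => Subtype.ext (bot_mulP hp a.2)
      mulB_sup := fun a b b' => Subtype.ext (mulP_sup hq a.2 b.1 b'.1)
      mulB_bot := fun a => Subtype.ext (mulP_bot hq a.2)
      essA := ?_
      lsepA := ?_
      rsepA := ?_
      essB := ?_
      lsepB := ?_
      rsepB := ?_
      actAX_mul := fun a a' x => rfl
      sup_actAX := fun a a' x => rfl
      bot_actAX := fun x => rfl
      actAX_sup := fun a x x' => mem_fst_sup hp a.2 x x'
      actAX_bot := fun a => mem_fst_bot hp a.2
      actXB_mul := fun x b b' => rfl
      sup_actXB := fun x x' b => mem_snd_sup hp b.2 x x'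
      bot_actXB := fun b => mem_snd_bot hp b.2
      actXB_sup := fun x b b' => rfl
      actXB_bot := fun x => rfl
      commX := fun a x b => comm_mix hp c1b a.2 b.2 x
      essXl := ?_
      sepXl := fun x x' h => c3 x x' fun x'' y => h (genElt p q (x'', y))
      essXr := ?_
      sepXr := fun x x' h => c4 x x' fun y x'' => h (genElt q p (y, x''))
      actBY_mul := fun b b' y => rfl
      sup_actBY := fun b b' y => rfl
      bot_actBY := fun y => rfl
      actBY_sup := fun b y y' => mem_fst_sup hq b.2 y y'
      actBY_bot := fun b => mem_fst_bot hq b.2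
      actYA_mul := fun y a a' => rfl
      sup_actYA := fun y y' a => mem_snd_sup hq a.2 y y'
      bot_actYA := fun a => mem_snd_bot hq a.2
      actYA_sup := fun y a a' => rfl
      actYA_bot := fun y => rfl
      commY := fun b y a => comm_mix hq c2b b.2 a.2 y
      essYl := ?_
      sepYl := fun y y' h => c5 y y' fun y'' x => h (genElt q p (y'', x))
      essYr := ?_
      sepYr := fun y y' h => c6 y y' fun x y'' => h (genElt p q (x, y''))
      sup_prA := fun x x' y => Subtype.ext (gen_sup₁ hp hq x x' y)
      bot_prA := fun y => Subtype.ext (gen_bot₁ hp hq y)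
      prA_sup := fun x y y' => Subtype.ext (gen_sup₂ hp hq x y y')
      prA_bot := fun x => Subtype.ext (gen_bot₂ hp hq x)
      sup_prB := fun y y' x => Subtype.ext (gen_sup₁ hq hp y y' x)
      bot_prB := fun x => Subtype.ext (gen_bot₁ hq hp x)
      prB_sup := fun y x x' => Subtype.ext (gen_sup₂ hq hp y x x')
      prB_bot := fun y => Subtype.ext (gen_bot₂ hq hp y)
      prA_actA := fun a x y => Subtype.ext (gen_actL hp hq c1b c2a a.2 x y)
      prA_actY := fun x y a => Subtype.ext (gen_actR hp hq c1a c1b c2b a.2 x y)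
      prB_actB := fun b y x => Subtype.ext (gen_actL hq hp c2b c1a b.2 y x)
      prB_actX := fun y x b => Subtype.ext (gen_actR hq hp c2a c2b c1b b.2 y x)
      prA_bal := fun x b y => Subtype.ext (gen_bal hp hq c1a c2a c2b b.2 x y)
      prB_bal := fun y a x => Subtype.ext (gen_bal hq hp c2a c1a c1b a.2 y x)
      link₁ := fun x₁ y x₂ => rfl
      link₂ := fun y₁ x y₂ => rfl
      surjA := ?_
      surjB := ?_ }
  · -- essA
    intro a
    obtain ⟨s, hs⟩ := ess_mulP hp hq c1b c2a psurj a.2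
    refine ⟨s.image fun t => (genElt p q t.1, genElt p q t.2), Subtype.ext ?_⟩
    rw [val_finsetSup, Finset.sup_image]
    exact hs
  · -- lsepA
    intro a b h
    refine Subtype.ext (Prod.ext ?_ ?_)
    · exact lsep_fst hp psurj a.2 b.2 fun x' y' z =>
        congrArg (fun r => r.val.1 z) (h (genElt p q (x', y')))
    · funext u
      exact c6 (a.1.2 u) (b.1.2 u) fun x' y' =>
        congrArg (fun r => r.val.2 u) (h (genElt p q (x', y')))
  · -- rsepA
    intro a b h
    refine Subtype.ext (Prod.ext ?_ ?_)
    · funext z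
      exact c3 (a.1.1 z) (b.1.1 z) fun x' y' =>
        congrArg (fun r => r.val.1 z) (h (genElt p q (x', y')))
    · exact rsep_snd hq qsurj a.2 b.2 fun x' y' u =>
        congrArg (fun r => r.val.2 u) (h (genElt p q (x', y')))
  · -- essB
    intro b
    obtain ⟨s, hs⟩ := ess_mulP hq hp c2b c1a qsurj b.2
    refine ⟨s.image fun t => (genElt q p t.1, genElt q p t.2), Subtype.ext ?_⟩
    rw [val_finsetSup, Finset.sup_image]
    exact hs
  · -- lsepB
    intro a b h
    refine Subtype.ext (Prod.ext ?_ ?_)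
    · exact lsep_fst hq qsurj a.2 b.2 fun y' x' w =>
        congrArg (fun r => r.val.1 w) (h (genElt q p (y', x')))
    · funext u
      exact c4 (a.1.2 u) (b.1.2 u) fun y' x' =>
        congrArg (fun r => r.val.2 u) (h (genElt q p (y', x')))
  · -- rsepB
    intro a b h
    refine Subtype.ext (Prod.ext ?_ ?_)
    · funext w
      exact c5 (a.1.1 w) (b.1.1 w) fun y' x' =>
        congrArg (fun r => r.val.1 w) (h (genElt q p (y', x')))
    · exact rsep_snd hp psurj a.2 b.2 fun y' x' u =>
        congrArg (fun r => r.val.2 u) (h (genElt q p (y', x')))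
  · -- essXl
    intro x
    obtain ⟨s, hs⟩ := psurj x
    refine ⟨s.image fun r => (genElt p q (r.1, r.2.1), r.2.2), ?_⟩
    rw [Finset.sup_image]
    exact hs
  · -- essXr
    intro x
    obtain ⟨s, hs⟩ := psurj x
    refine ⟨s.image fun r => (r.1, genElt q p (r.2.1, r.2.2)), ?_⟩
    rw [Finset.sup_image]
    exact hs
  · -- essYl
    intro y
    obtain ⟨s, hs⟩ := qsurj y
    refine ⟨s.image fun r => (genElt q p (r.1, r.2.1), r.2.2), ?_⟩
    rw [Finset.sup_image]
    exact hs
  · -- essYr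
    intro y
    obtain ⟨s, hs⟩ := qsurj y
    refine ⟨s.image fun r => (r.1, genElt p q (r.2.1, r.2.2)), ?_⟩
    rw [Finset.sup_image]
    exact hs
  · -- surjA
    intro a
    obtain ⟨s, hs⟩ := a.2
    refine ⟨s, Subtype.ext ?_⟩
    rw [val_finsetSup]
    exact hs
  · -- surjB
    intro b
    obtain ⟨s, hs⟩ := b.2
    refine ⟨s, Subtype.ext ?_⟩
    rw [val_finsetSup]
    exact hs
end

section
/- Let X and Y be complete lattices with surjective sup-preserving maps p : X⊗Y⊗X → X and q : Y⊗X⊗Y → Y satisfying the six conditions of the Morita pair characterization. Then the pairings (x,y) = L_{x⊗y} ∈ L and [y,x] = R_{y⊗x} ∈ R are balanced: (x·R_b, y) = (x, R_b·y) and [y·L_a, x] = [y, L_a·x] for all a ∈ X⊗Y, b ∈ Y⊗X, x ∈ X, y ∈ Y, where the actions are L_a·x = p(a⊗x), x·R_b = p(x⊗b), R_b·y = q(b⊗y), y·L_a = q(y⊗a). -/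
/-- the pairings `(x,y) = L_{x⊗y}` and `[y,x] = R_{y⊗x}` are
balanced: `(x·R_b, y) = (x, R_b·y)` and `[y·L_a, x] = [y, L_a·x]` for all
`a ∈ X⊗Y` and `b ∈ Y⊗X` (represented by sets `S : Set (X × Y)`,
`T : Set (Y × X)` of simple tensors), where the actions are
`L_a·x = p(a⊗x)`, `x·R_b = p(x⊗b)`, `R_b·y = q(b⊗y)`, `y·L_a = q(y⊗a)`,
and the pairings are compared as operators (evaluated at every point). -/
theorem pairings_balanced {X Y : Type*} [CompleteLattice X] [CompleteLattice Y]
    (p : X → Y → X → X) (q : Y → X → Y → Y)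
    (hp : TriSupPreserving p) (hq : TriSupPreserving q)
    (psurj : ∀ x : X, ∃ S : Set (X × Y × X), x = ⨆ t ∈ S, p t.1 t.2.1 t.2.2)
    (qsurj : ∀ y : Y, ∃ S : Set (Y × X × Y), y = ⨆ t ∈ S, q t.1 t.2.1 t.2.2)
    (c1a : ∀ (x₁ x₂ x₃ : X) (y₁ y₂ : Y),
      p (p x₁ y₁ x₂) y₂ x₃ = p x₁ (q y₁ x₂ y₂) x₃)
    (c1b : ∀ (x₁ x₂ x₃ : X) (y₁ y₂ : Y),
      p (p x₁ y₁ x₂) y₂ x₃ = p x₁ y₁ (p x₂ y₂ x₃))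
    (c2a : ∀ (y₁ y₂ y₃ : Y) (x₁ x₂ : X),
      q (q y₁ x₁ y₂) x₂ y₃ = q y₁ (p x₁ y₂ x₂) y₃)
    (c2b : ∀ (y₁ y₂ y₃ : Y) (x₁ x₂ : X),
      q (q y₁ x₁ y₂) x₂ y₃ = q y₁ x₁ (q y₂ x₂ y₃))
    (c3 : ∀ x₁ x₂ : X, (∀ (x : X) (y : Y), p x y x₁ = p x y x₂) → x₁ = x₂)
    (c4 : ∀ x₁ x₂ : X, (∀ (y : Y) (x : X), p x₁ y x = p x₂ y x) → x₁ = x₂)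
    (c5 : ∀ y₁ y₂ : Y, (∀ (y : Y) (x : X), q y x y₁ = q y x y₂) → y₁ = y₂)
    (c6 : ∀ y₁ y₂ : Y, (∀ (x : X) (y : Y), q y₁ x y = q y₂ x y) → y₁ = y₂) :
    -- `(x·R_b, y) = (x, R_b·y)`:
    (∀ (x : X) (y : Y) (T : Set (Y × X)) (z : X),
      p (⨆ t ∈ T, p x t.1 t.2) y z = p x (⨆ t ∈ T, q t.1 t.2 y) z) ∧
    -- `[y·L_a, x] = [y, L_a·x]`:
    (∀ (y : Y) (x : X) (S : Set (X × Y)) (w : Y),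
      q (⨆ s ∈ S, q y s.1 s.2) x w = q y (⨆ s ∈ S, p s.1 s.2 x) w) := by
  obtain ⟨hp1, hp2, hp3⟩ := hp
  obtain ⟨hq1, hq2, hq3⟩ := hq
  constructor
  · intro x y T z
    rw [show (⨆ t ∈ T, p x t.1 t.2) = sSup ((fun t : Y × X => p x t.1 t.2) '' T) from
        (sSup_image).symm,
      show (⨆ t ∈ T, q t.1 t.2 y) = sSup ((fun t : Y × X => q t.1 t.2 y) '' T) from
        (sSup_image).symm,
      hp1, hp2, iSup_image, iSup_image]
    exact iSup_congr fun t => iSup_congr fun _ => c1a x t.2 z t.1 y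
  · intro y x S w
    rw [show (⨆ s ∈ S, q y s.1 s.2) = sSup ((fun s : X × Y => q y s.1 s.2) '' S) from
        (sSup_image).symm,
      show (⨆ s ∈ S, p s.1 s.2 x) = sSup ((fun s : X × Y => p s.1 s.2 x) '' S) from
        (sSup_image).symm,
      hq1, hq2, iSup_image, iSup_image]
    exact iSup_congr fun s => iSup_congr fun _ => c2a y s.2 w s.1 x
end
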